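/- arXiv:2207.10325 — 8 statements merged into one kernel-verified Lean document; each statement's English description precedes it below -/
import Mathlib

section
/- Exact reduced cost bound: for any dual optimal solution u* of the primal LP and any index k such that the restricted problem (with x_k = 1 added) is feasible, one has 0 ≤ r_k(u*) ≤ R_k, where R_k = z*_{|k} − z* is the exact reduced cost (increase of the optimum when variable k is forced to 1). -/
open Matrix

/-- Primal feasibility for the LP with partition constraints:
Ax ≥ b, Σ_{j : grp j = i} x_j = 1 for each group i, x ≥ 0. -/
def Feas {m n E : ℕ} (A : Matrix (Fin m) (Fin E) ℝ) (b : Fin m → ℝ)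
    (grp : Fin E → Fin n) (x : Fin E → ℝ) : Prop :=
  b ≤ A.mulVec x ∧ (∀ i : Fin n, (∑ j : Fin E, if grp j = i then x j else 0) = 1) ∧ 0 ≤ x

/-- A 0/1 (integral) vector. -/
def Integral {E : ℕ} (x : Fin E → ℝ) : Prop := ∀ j, x j = 0 ∨ x j = 1

/-- Dual feasibility: u_q ≥ 0 and u_{grp j} + Σ_q A_{qj} u_q ≤ c_j for each index j. -/
def DualFeas {m n E : ℕ} (A : Matrix (Fin m) (Fin E) ℝ) (c : Fin E → ℝ)
    (grp : Fin E → Fin n) (uq : Fin m → ℝ) (uv : Fin n → ℝ) : Prop :=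
  0 ≤ uq ∧ ∀ j : Fin E, uv (grp j) + (∑ q : Fin m, A q j * uq q) ≤ c j

/-- Dual objective w(u) = b·u_q + Σ_i u_i. -/
def dualObj {m n : ℕ} (b : Fin m → ℝ) (uq : Fin m → ℝ) (uv : Fin n → ℝ) : ℝ :=
  b ⬝ᵥ uq + ∑ i : Fin n, uv i

/-- Reduced cost r_j(u) = c_j − u_{grp j} − Σ_q A_{qj} u_q. -/
def rc {m n E : ℕ} (A : Matrix (Fin m) (Fin E) ℝ) (c : Fin E → ℝ)
    (grp : Fin E → Fin n) (uq : Fin m → ℝ) (uv : Fin n → ℝ) (j : Fin E) : ℝ :=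
  c j - uv (grp j) - ∑ q : Fin m, A q j * uq q

/-- Exact reduced cost bound: for any dual optimal u* and any index k such that the
restricted problem (x_k = 1 added) has an (attained) optimum z*_{|k},
0 ≤ r_k(u*) ≤ R_k = z*_{|k} − z*. -/
theorem stmt3 {m n E : ℕ} (A : Matrix (Fin m) (Fin E) ℝ) (b : Fin m → ℝ)
    (c : Fin E → ℝ) (grp : Fin E → Fin n) (k : Fin E) (zstar zk : ℝ)
    (hz : IsLeast {z | ∃ x : Fin E → ℝ, Feas A b grp x ∧ c ⬝ᵥ x = z} zstar)
    (hzk : IsLeast {z | ∃ x : Fin E → ℝ, Feas A b grp x ∧ x k = 1 ∧ c ⬝ᵥ x = z} zk)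
    (uq : Fin m → ℝ) (uv : Fin n → ℝ)
    (hu : DualFeas A c grp uq uv) (hopt : dualObj b uq uv = zstar) :
    0 ≤ rc A c grp uq uv k ∧ rc A c grp uq uv k ≤ zk - zstar := by
  obtain ⟨⟨x, ⟨hAx, hgrp, hxpos⟩, hxk, hcx⟩, -⟩ := hzk
  have hrc : ∀ j, 0 ≤ rc A c grp uq uv j := by
    intro j
    have := hu.2 j
    simp only [rc]
    linarith
  refine ⟨hrc k, ?_⟩
  -- sum of group dual variables
  have h1 : ∑ i : Fin n, uv i = ∑ j : Fin E, uv (grp j) * x j := by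
    calc ∑ i : Fin n, uv i
        = ∑ i : Fin n, uv i * ∑ j : Fin E, (if grp j = i then x j else 0) := by
          simp [hgrp]
      _ = ∑ i : Fin n, ∑ j : Fin E, (if grp j = i then uv (grp j) * x j else 0) := by
          refine Finset.sum_congr rfl fun i _ => ?_
          rw [Finset.mul_sum]
          refine Finset.sum_congr rfl fun j _ => ?_
          split <;> simp_all
      _ = ∑ j : Fin E, ∑ i : Fin n, (if grp j = i then uv (grp j) * x j else 0) :=
          Finset.sum_comm
      _ = ∑ j : Fin E, uv (grp j) * x j := by
          refine Finset.sum_congr rfl fun j _ => ?_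
          simp
  -- weak duality part: b·uq ≤ Σ_q uq q * (Ax)_q
  have h2 : b ⬝ᵥ uq ≤ ∑ q : Fin m, (∑ j : Fin E, A q j * x j) * uq q := by
    rw [dotProduct]
    refine Finset.sum_le_sum fun q _ => ?_
    have hb := hAx q
    have huq := hu.1 q
    simp only [Matrix.mulVec, dotProduct] at hb
    exact mul_le_mul_of_nonneg_right hb huq
  -- single term below the sum
  have h3 : rc A c grp uq uv k ≤ ∑ j : Fin E, x j * rc A c grp uq uv j := by
    have := Finset.single_le_sum (f := fun j => x j * rc A c grp uq uv j)
      (fun j _ => mul_nonneg (hxpos j) (hrc j)) (Finset.mem_univ k)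
    simpa [hxk] using this
  -- expand the sum
  have h4 : ∑ j : Fin E, x j * rc A c grp uq uv j
      = c ⬝ᵥ x - (∑ j : Fin E, uv (grp j) * x j)
        - ∑ q : Fin m, (∑ j : Fin E, A q j * x j) * uq q := by
    have hsw : ∑ q : Fin m, (∑ j : Fin E, A q j * x j) * uq q
        = ∑ j : Fin E, x j * ∑ q : Fin m, A q j * uq q := by
      simp only [Finset.sum_mul, Finset.mul_sum]
      rw [Finset.sum_comm]
      exact Finset.sum_congr rfl fun j _ => Finset.sum_congr rfl fun q _ => by ring
    rw [dotProduct, hsw]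
    simp only [rc, mul_sub, Finset.sum_sub_distrib]
    congr 1
    congr 1 <;> exact Finset.sum_congr rfl fun j _ => by ring
  have hd : dualObj b uq uv = b ⬝ᵥ uq + ∑ i : Fin n, uv i := rfl
  rw [← hopt, hd, ← hcx]
  calc rc A c grp uq uv k ≤ ∑ j : Fin E, x j * rc A c grp uq uv j := h3
    _ = c ⬝ᵥ x - (∑ j : Fin E, uv (grp j) * x j)
        - ∑ q : Fin m, (∑ j : Fin E, A q j * x j) * uq q := h4
    _ ≤ c ⬝ᵥ x - (∑ i : Fin n, uv i) - b ⬝ᵥ uq := by rw [h1]; linarith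
    _ = c ⬝ᵥ x - (b ⬝ᵥ uq + ∑ i : Fin n, uv i) := by ring
end

section
/- Cost-perturbation duality lemma: let z* and z*_{|k} be the optimal values of the primal LP and of the primal restricted by x_k = 1, with z*_{|k} finite, and set R_k = z*_{|k} − z* ≥ 0. Define a perturbed cost vector c̃ by c̃_k = c_k − R_k and c̃_j = c_j for j ≠ k. Assume the perturbed primal (with costs c̃) attains its optimum at an integral vertex whenever feasible (ideal formulation). Then the optimal value of the perturbed primal equals z*. -/
open Matrix

/-- Cost-perturbation duality lemma: with z* and z*_{|k} the optimal values of the primal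
and of the primal restricted by x_k = 1 (attained), R_k = z*_{|k} − z* ≥ 0, and the
perturbed costs c̃ (c̃_k = c_k − R_k, c̃_j = c_j otherwise), if the perturbed primal
attains its optimum at an integral point whenever feasible, then the optimal value of
the perturbed primal equals z*. -/
theorem stmt4 {m n E : ℕ} (A : Matrix (Fin m) (Fin E) ℝ) (b : Fin m → ℝ)
    (c : Fin E → ℝ) (grp : Fin E → Fin n) (k : Fin E) (zstar zk : ℝ)
    (hz : IsLeast {z | ∃ x : Fin E → ℝ, Feas A b grp x ∧ c ⬝ᵥ x = z} zstar)
    (hzk : IsLeast {z | ∃ x : Fin E → ℝ, Feas A b grp x ∧ x k = 1 ∧ c ⬝ᵥ x = z} zk)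
    (hRk : 0 ≤ zk - zstar)
    (ctilde : Fin E → ℝ)
    (hct : ctilde = Function.update c k (c k - (zk - zstar)))
    (hideal : (∃ x0 : Fin E → ℝ, Feas A b grp x0) →
      ∃ xt : Fin E → ℝ, Feas A b grp xt ∧ Integral xt ∧
        ∀ y : Fin E → ℝ, Feas A b grp y → ctilde ⬝ᵥ xt ≤ ctilde ⬝ᵥ y) :
    IsLeast {z | ∃ x : Fin E → ℝ, Feas A b grp x ∧ ctilde ⬝ᵥ x = z} zstar := by
  have key : ∀ x : Fin E → ℝ, ctilde ⬝ᵥ x = c ⬝ᵥ x - (zk - zstar) * x k := by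
    intro x
    subst hct
    have : ∀ j : Fin E, Function.update c k (c k - (zk - zstar)) j * x j
        = c j * x j - (if j = k then (zk - zstar) * x j else 0) := by
      intro j
      by_cases h : j = k
      · subst h; simp [Function.update_self]; ring
      · simp [Function.update_of_ne h, h]
    simp only [dotProduct, this, Finset.sum_sub_distrib, Finset.sum_ite_eq' Finset.univ k]
    simp
  constructor
  · obtain ⟨x, hx, hxk, hcx⟩ := hzk.1
    exact ⟨x, hx, by rw [key, hcx, hxk]; ring⟩
  · rintro z ⟨y, hy, rfl⟩
    obtain ⟨xt, hxt, hint, hopt⟩ := hideal ⟨y, hy⟩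
    have h1 : ctilde ⬝ᵥ xt ≤ ctilde ⬝ᵥ y := hopt y hy
    have h2 : zstar ≤ ctilde ⬝ᵥ xt := by
      rcases hint k with h | h
      · rw [key, h]
        simpa using hz.2 ⟨xt, hxt, rfl⟩
      · rw [key, h]
        have := hzk.2 ⟨xt, hxt, h, rfl⟩
        linarith
    linarith
end

section
/- Existence of a dual solution achieving the exact reduced cost: for an ideal LP formulation with partition constraints, and any index k belonging to at least one feasible primal (integral) solution, there exists an optimal dual solution u* of the original LP such that r_k(u*) = R_k, where R_k = z*_{|k} − z*. -/
open Matrix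

set_option linter.unusedSectionVars false
set_option maxHeartbeats 1000000

open Finset

section FarkasAux
variable {κ : Type*} [Fintype κ] [DecidableEq κ] {H : Type*} [NormedAddCommGroup H]
  [NormedSpace ℝ H] [FiniteDimensional ℝ H]

lemma carath_reduce (v : κ → H) (T : Finset κ) :
    ∀ (y : κ → ℝ), 0 ≤ y → (∀ j ∉ T, y j = 0) →
    ∃ (T' : Finset κ) (y' : κ → ℝ), 0 ≤ y' ∧ (∀ j ∉ T', y' j = 0) ∧
      ∑ j, y' j • v j = ∑ j, y j • v j ∧ LinearIndependent ℝ (fun j : T' => v j) := by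
  induction T using Finset.strongInduction with
  | _ T ih =>
    intro y hy hsupp
    by_cases hLI : LinearIndependent ℝ (fun j : T => v j)
    · exact ⟨T, y, hy, hsupp, rfl, hLI⟩
    obtain ⟨g, hg0, i0, hgi0⟩ := Fintype.not_linearIndependent_iff.mp hLI
    set d : κ → ℝ := fun j => if h : j ∈ T then g ⟨j, h⟩ else 0 with hd
    have hdT : ∀ j ∉ T, d j = 0 := fun j hj => by simp [hd, hj]
    have hdsum : ∑ j, d j • v j = 0 := by
      have h1 : ∑ j, d j • v j = ∑ j ∈ T, d j • v j :=
        (Finset.sum_subset (Finset.subset_univ T) (fun j _ hj => by simp [hdT j hj])).symm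
      rw [h1, ← Finset.sum_attach T (fun j => d j • v j), ← hg0]
      apply Finset.sum_congr rfl
      intro j _
      simp [hd, j.2]
    have hdne : ∃ j ∈ T, d j ≠ 0 := ⟨i0, i0.2, by simpa [hd, i0.2] using hgi0⟩
    -- choose e = d or -d with a positive entry in T
    obtain ⟨e, heT, hesum, j1, hj1T, hj1pos⟩ :
        ∃ e : κ → ℝ, (∀ j ∉ T, e j = 0) ∧ ∑ j, e j • v j = 0 ∧ ∃ j ∈ T, 0 < e j := by
      by_cases hpos : ∃ j ∈ T, 0 < d j
      · obtain ⟨j, hj, h⟩ := hpos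
        exact ⟨d, hdT, hdsum, j, hj, h⟩
      · push_neg at hpos
        obtain ⟨j, hj, h⟩ := hdne
        refine ⟨-d, fun j hj => by simp [hdT j hj], by simp [hdsum], j, hj, ?_⟩
        simp only [Pi.neg_apply, neg_pos]
        exact lt_of_le_of_ne (hpos j hj) h
    set P : Finset κ := T.filter (fun j => 0 < e j) with hP
    have hPne : P.Nonempty := ⟨j1, by simp [hP, hj1T, hj1pos]⟩
    obtain ⟨j0, hj0P, hj0min⟩ := P.exists_min_image (fun j => y j / e j) hPne
    have hj0T : j0 ∈ T := (Finset.mem_filter.mp hj0P).1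
    have hej0 : 0 < e j0 := (Finset.mem_filter.mp hj0P).2
    set α : ℝ := y j0 / e j0 with hα
    have hα0 : 0 ≤ α := div_nonneg (hy j0) hej0.le
    set y' : κ → ℝ := fun j => y j - α * e j with hy'
    have hy'0 : 0 ≤ y' := by
      intro j
      have hyj : (0:ℝ) ≤ y j := hy j
      simp only [hy', Pi.zero_apply]
      rcases le_or_gt (e j) 0 with h | h
      · nlinarith [hyj, mul_nonpos_of_nonneg_of_nonpos hα0 h]
      · have hjP : j ∈ P := by
          refine Finset.mem_filter.mpr ⟨?_, h⟩
          by_contra hjT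
          exact absurd (heT j hjT) h.ne'
        have := hj0min j hjP
        rw [hα, sub_nonneg]
        calc α * e j ≤ (y j / e j) * e j := by
              apply mul_le_mul_of_nonneg_right _ h.le
              exact this
          _ = y j := div_mul_cancel₀ _ h.ne'
    have hy'supp : ∀ j ∉ T.erase j0, y' j = 0 := by
      intro j hj
      by_cases h : j = j0
      · simp [hy', h, hα, div_mul_cancel₀ _ hej0.ne']
      · have hjT : j ∉ T := fun hT => hj (Finset.mem_erase.mpr ⟨h, hT⟩)
        simp [hy', hsupp j hjT, heT j hjT]
    have hy'sum : ∑ j, y' j • v j = ∑ j, y j • v j := by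
      simp only [hy', sub_smul, Finset.sum_sub_distrib]
      simp only [mul_smul]
      rw [← Finset.smul_sum, hesum, smul_zero, sub_zero]
    obtain ⟨T', z, hz0, hzsupp, hzsum, hzLI⟩ :=
      ih (T.erase j0) (Finset.erase_ssubset hj0T) y' hy'0 hy'supp
    exact ⟨T', z, hz0, hzsupp, hzsum.trans hy'sum, hzLI⟩

lemma isClosed_cone_fg (v : κ → H) :
    IsClosed {h : H | ∃ x : κ → ℝ, 0 ≤ x ∧ ∑ j, x j • v j = h} := by
  classical
  have hset : {h : H | ∃ x : κ → ℝ, 0 ≤ x ∧ ∑ j, x j • v j = h} =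
      ⋃ T : Finset κ, {h : H | LinearIndependent ℝ (fun j : T => v j) ∧
        ∃ t : T → ℝ, 0 ≤ t ∧ ∑ j : T, t j • v (j : κ) = h} := by
    ext h
    simp only [Set.mem_setOf_eq, Set.mem_iUnion]
    constructor
    · rintro ⟨x, hx0, hxs⟩
      obtain ⟨T', y', hy0, hsupp, hsum, hLI⟩ :=
        carath_reduce v Finset.univ x hx0 (fun j hj => absurd (Finset.mem_univ j) hj)
      refine ⟨T', hLI, fun j => y' j, fun j => hy0 j, ?_⟩
      rw [← hxs, ← hsum, Finset.sum_coe_sort T' (fun j => y' j • v j)]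
      exact Finset.sum_subset (Finset.subset_univ T') (fun j _ hj => by simp [hsupp j hj])
    · rintro ⟨T, hLI, t, ht0, hts⟩
      refine ⟨fun j => if hj : j ∈ T then t ⟨j, hj⟩ else 0, fun j => by
        by_cases hj : j ∈ T
        · simpa [hj] using ht0 ⟨j, hj⟩
        · simp [hj], ?_⟩
      have h1 : ∑ j : κ, (if hj : j ∈ T then t ⟨j, hj⟩ else 0) • v j
          = ∑ j ∈ T, (if hj : j ∈ T then t ⟨j, hj⟩ else 0) • v j :=
        (Finset.sum_subset (Finset.subset_univ T) (fun j _ hj => by simp [hj])).symm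
      rw [h1, ← Finset.sum_attach T (fun j => (if hj : j ∈ T then t ⟨j, hj⟩ else 0) • v j),
        ← hts]
      exact Finset.sum_congr rfl (fun j _ => by simp [j.2])
  rw [hset]
  apply isClosed_iUnion_of_finite
  intro T
  by_cases hLI : LinearIndependent ℝ (fun j : T => v j)
  · set f : (T → ℝ) →ₗ[ℝ] H := Fintype.linearCombination ℝ (fun j : T => v j) with hf
    have hfa : ∀ t : T → ℝ, f t = ∑ j : T, t j • v (j : κ) := by
      intro t; simp [hf, Fintype.linearCombination_apply]
    have hker : LinearMap.ker f = ⊥ := by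
      rw [LinearMap.ker_eq_bot']
      intro t ht
      have := Fintype.linearIndependent_iff.mp hLI t (by rw [← hfa]; exact ht)
      funext j; exact this j
    have himg : {h : H | LinearIndependent ℝ (fun j : T => v j) ∧
        ∃ t : T → ℝ, 0 ≤ t ∧ ∑ j : T, t j • v (j : κ) = h} = f '' Set.Ici 0 := by
      ext h
      simp only [Set.mem_setOf_eq, Set.mem_image, Set.mem_Ici, hLI, true_and]
      constructor
      · rintro ⟨t, ht0, hts⟩; exact ⟨t, ht0, by rw [hfa]; exact hts⟩
      · rintro ⟨t, ht0, hts⟩; exact ⟨t, ht0, by rw [← hfa]; exact hts⟩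
    rw [himg]
    exact (LinearMap.isClosedEmbedding_of_injective hker).isClosedMap _ isClosed_Ici
  · have : {h : H | LinearIndependent ℝ (fun j : T => v j) ∧
        ∃ t : T → ℝ, 0 ≤ t ∧ ∑ j : T, t j • v (j : κ) = h} = ∅ := by
      ext h; simp [hLI]
    rw [this]; exact isClosed_empty

end FarkasAux

open scoped InnerProductSpace in
lemma farkas {ι κ : Type*} [Fintype ι] [Fintype κ] [DecidableEq κ] (v : κ → ι → ℝ) (w : ι → ℝ) :
    (∃ x : κ → ℝ, 0 ≤ x ∧ ∀ i, ∑ j, x j * v j i = w i) ∨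
    (∃ y : ι → ℝ, (∀ j, ∑ i, v j i * y i ≤ 0) ∧ 0 < ∑ i, w i * y i) := by
  classical
  set H := EuclideanSpace ℝ ι
  set v' : κ → H := fun j => (WithLp.equiv 2 (ι → ℝ)).symm (v j) with hv'
  set w' : H := (WithLp.equiv 2 (ι → ℝ)).symm w with hw'
  have happ : ∀ (x : κ → ℝ) (i : ι), (∑ j, x j • v' j) i = ∑ j, x j * v j i := by
    intro x i
    rw [WithLp.ofLp_sum, Finset.sum_apply]
    rfl
  set S : Set H := {h | ∃ x : κ → ℝ, 0 ≤ x ∧ ∑ j, x j • v' j = h} with hS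
  by_cases hws : w' ∈ S
  · obtain ⟨x, hx0, hxs⟩ := hws
    refine Or.inl ⟨x, hx0, fun i => ?_⟩
    rw [← happ x i, hxs]
    rfl
  · -- separation
    set K : ConvexCone ℝ H :=
      { carrier := S
        smul_mem' := by
          rintro c hc h ⟨x, hx0, hxs⟩
          exact ⟨c • x, smul_nonneg hc.le hx0, by
            rw [← hxs, Finset.smul_sum]
            exact Finset.sum_congr rfl (fun j _ => by simp [smul_smul])⟩
        add_mem' := by
          rintro h1 ⟨x1, hx10, hx1s⟩ h2 ⟨x2, hx20, hx2s⟩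
          exact ⟨x1 + x2, add_nonneg hx10 hx20, by
            rw [← hx1s, ← hx2s, ← Finset.sum_add_distrib]
            exact Finset.sum_congr rfl (fun j _ => by simp [add_smul])⟩ } with hK
    have hne : (K : Set H).Nonempty := ⟨0, 0, le_refl _, by simp⟩
    have hcl : IsClosed (K : Set H) := isClosed_cone_fg v'
    obtain ⟨y, hy1, hy2⟩ :
        ∃ y, (∀ x ∈ K, 0 ≤ ⟪x, y⟫_ℝ) ∧ ⟪y, w'⟫_ℝ < 0 := by
      let C : ProperCone ℝ H :=
        ⟨K.toPointedCone (ConvexCone.Pointed.of_nonempty_of_isClosed hne hcl), hcl⟩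
      obtain ⟨y, h1, h2⟩ := C.hyperplane_separation' (x₀ := w') hws
      exact ⟨y, h1, by rwa [real_inner_comm]⟩
    refine Or.inr ⟨fun i => -(y i), fun j => ?_, ?_⟩
    · have hmem : v' j ∈ K := by
        refine ⟨fun j' => if j' = j then 1 else 0, fun j' => by dsimp; split <;> norm_num, ?_⟩
        simp [ite_smul]
      have := hy1 (v' j) hmem
      have hinner : ⟪v' j, y⟫_ℝ = ∑ i, v j i * y i := by
        simp [PiLp.inner_apply, RCLike.inner_apply, hv']
        rw [PiLp.inner_apply]
        exact Finset.sum_congr rfl (fun i _ => by simp [RCLike.inner_apply, mul_comm])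
      rw [hinner] at this
      have he : ∑ i, v j i * -(y i) = -(∑ i, v j i * y i) := by
        simp [mul_neg]
      rw [he]
      linarith
    · have hinner2 : ⟪y, w'⟫_ℝ = ∑ i, y i * w i := by
        simp [PiLp.inner_apply, RCLike.inner_apply, hw']
        rw [PiLp.inner_apply]
        exact Finset.sum_congr rfl (fun i _ => by simp [RCLike.inner_apply, mul_comm])
      rw [hinner2] at hy2
      have he : ∑ i, w i * -(y i) = -(∑ i, y i * w i) := by
        simp [mul_neg, mul_comm]
      rw [he]
      linarith

lemma lp_identity {m n E : ℕ} (A : Matrix (Fin m) (Fin E) ℝ) (b : Fin m → ℝ)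
    (c : Fin E → ℝ) (grp : Fin E → Fin n) (x : Fin E → ℝ) (uq : Fin m → ℝ) (uv : Fin n → ℝ)
    (hgrp : ∀ i : Fin n, (∑ j : Fin E, if grp j = i then x j else 0) = 1) :
    c ⬝ᵥ x - dualObj b uq uv =
      (∑ j, rc A c grp uq uv j * x j) + uq ⬝ᵥ (A.mulVec x - b) := by
  have h1 : ∑ j, uv (grp j) * x j = ∑ i, uv i := by
    calc ∑ j, uv (grp j) * x j
        = ∑ j, ∑ i, if grp j = i then uv i * x j else 0 := by
          refine Finset.sum_congr rfl (fun j _ => ?_)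
          rw [Finset.sum_ite_eq]
          simp
      _ = ∑ i, ∑ j, if grp j = i then uv i * x j else 0 := Finset.sum_comm
      _ = ∑ i, uv i * ∑ j, if grp j = i then x j else 0 := by
          refine Finset.sum_congr rfl (fun i _ => ?_)
          rw [Finset.mul_sum]
          exact Finset.sum_congr rfl (fun j _ => by split <;> simp
            )
      _ = ∑ i, uv i := by simp [hgrp]
  have h2 : ∑ j, (∑ q, A q j * uq q) * x j = ∑ q, uq q * ∑ j, A q j * x j := by
    calc ∑ j, (∑ q, A q j * uq q) * x j
        = ∑ j, ∑ q, A q j * uq q * x j := by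
          exact Finset.sum_congr rfl (fun j _ => Finset.sum_mul ..)
      _ = ∑ q, ∑ j, A q j * uq q * x j := Finset.sum_comm
      _ = ∑ q, uq q * ∑ j, A q j * x j := by
          refine Finset.sum_congr rfl (fun q _ => ?_)
          rw [Finset.mul_sum]
          exact Finset.sum_congr rfl (fun j _ => by ring)
  simp only [rc, dualObj, dotProduct, Matrix.mulVec, Pi.sub_apply, dotProduct,
    sub_mul, mul_sub, Finset.sum_sub_distrib]
  have h3 : ∑ q, b q * uq q = ∑ q, uq q * b q :=
    Finset.sum_congr rfl (fun q _ => mul_comm _ _)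
  rw [h1, h2, h3]
  ring

lemma weak_duality {m n E : ℕ} (A : Matrix (Fin m) (Fin E) ℝ) (b : Fin m → ℝ)
    (c : Fin E → ℝ) (grp : Fin E → Fin n) (x : Fin E → ℝ) (uq : Fin m → ℝ) (uv : Fin n → ℝ)
    (hx : Feas A b grp x) (hu : DualFeas A c grp uq uv) :
    dualObj b uq uv ≤ c ⬝ᵥ x := by
  have hid := lp_identity A b c grp x uq uv hx.2.1
  have hrc : 0 ≤ ∑ j, rc A c grp uq uv j * x j := by
    refine Finset.sum_nonneg (fun j _ => mul_nonneg ?_ (hx.2.2 j))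
    have := hu.2 j
    simp only [rc]
    linarith
  have hslack : 0 ≤ uq ⬝ᵥ (A.mulVec x - b) := by
    refine Finset.sum_nonneg (fun q _ => mul_nonneg (hu.1 q) ?_)
    have := hx.1 q
    simp only [Pi.sub_apply]
    linarith
  linarith

lemma strong_duality {m n E : ℕ} (A : Matrix (Fin m) (Fin E) ℝ) (b : Fin m → ℝ)
    (c : Fin E → ℝ) (grp : Fin E → Fin n) (zstar : ℝ)
    (hz : IsLeast {z | ∃ x : Fin E → ℝ, Feas A b grp x ∧ c ⬝ᵥ x = z} zstar) :
    ∃ (uq : Fin m → ℝ) (uv : Fin n → ℝ),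
      DualFeas A c grp uq uv ∧ dualObj b uq uv = zstar := by
  classical
  obtain ⟨⟨x0, hx0, hx0v⟩, hlb⟩ := hz
  have hlb' : ∀ y : Fin E → ℝ, Feas A b grp y → zstar ≤ c ⬝ᵥ y :=
    fun y hy => hlb ⟨y, hy, rfl⟩
  set v : ((Fin m ⊕ (Fin n ⊕ Fin n)) ⊕ (Fin E ⊕ Unit)) → (Fin E ⊕ Unit) → ℝ :=
    fun col => match col with
    | .inl (.inl q) => Sum.elim (fun j => A q j) (fun _ => b q)
    | .inl (.inr (.inl i)) => Sum.elim (fun j => if grp j = i then (1:ℝ) else 0) (fun _ => 1)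
    | .inl (.inr (.inr i)) => Sum.elim (fun j => if grp j = i then (-1:ℝ) else 0) (fun _ => -1)
    | .inr (.inl j0) => Sum.elim (fun j => if j = j0 then (1:ℝ) else 0) (fun _ => 0)
    | .inr (.inr _) => Sum.elim (fun _ => (0:ℝ)) (fun _ => -1)
    with hv
  set w : (Fin E ⊕ Unit) → ℝ := Sum.elim c (fun _ => zstar) with hw
  rcases farkas v w with ⟨xx, hxx0, hxx⟩ | ⟨y, hy1, hy2⟩
  · set uq : Fin m → ℝ := fun q => xx (.inl (.inl q)) with huq
    set uvp : Fin n → ℝ := fun i => xx (.inl (.inr (.inl i))) with huvp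
    set uvm : Fin n → ℝ := fun i => xx (.inl (.inr (.inr i))) with huvm
    set s : Fin E → ℝ := fun j => xx (.inr (.inl j)) with hs
    set t : ℝ := xx (.inr (.inr ())) with ht
    have heqj : ∀ j : Fin E,
        (∑ q, uq q * A q j) + uvp (grp j) - uvm (grp j) + s j = c j := by
      intro j
      have := hxx (.inl j)
      simp only [hv, hw, Fintype.sum_sum_type, Sum.elim_inl, Sum.elim_inr, mul_ite, mul_one,
        mul_zero, mul_neg, Finset.sum_ite_eq, Finset.mem_univ, if_true, Fintype.univ_punit,
        Finset.sum_singleton, Finset.sum_neg_distrib] at this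
      linarith [this]
    have heqz : (∑ q, uq q * b q) + (∑ i, uvp i) - (∑ i, uvm i) - t = zstar := by
      have := hxx (.inr ())
      simp only [hv, hw, Fintype.sum_sum_type, Sum.elim_inl, Sum.elim_inr, mul_ite, mul_one,
        mul_zero, mul_neg, Finset.mem_univ, if_true, Fintype.univ_punit,
        Finset.sum_singleton, Finset.sum_const_zero, zero_add,
        Finset.sum_neg_distrib] at this
      simp only [huq, huvp, huvm, ht]
      linarith [this]
    refine ⟨uq, uvp - uvm, ⟨fun q => hxx0 (.inl (.inl q)), fun j => ?_⟩, ?_⟩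
    · have h1 := heqj j
      have hsj : 0 ≤ s j := hxx0 (.inr (.inl j))
      have hcomm : ∑ q, A q j * uq q = ∑ q, uq q * A q j :=
        Finset.sum_congr rfl (fun q _ => mul_comm _ _)
      simp only [Pi.sub_apply]
      rw [hcomm]
      linarith
    · have hge : zstar ≤ dualObj b uq (uvp - uvm) := by
        have hcomm : b ⬝ᵥ uq = ∑ q, uq q * b q :=
          Finset.sum_congr rfl (fun q _ => mul_comm _ _)
        have htn : 0 ≤ t := hxx0 (.inr (.inr ()))
        simp only [dualObj, hcomm, Pi.sub_apply, Finset.sum_sub_distrib]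
        linarith
      have hle : dualObj b uq (uvp - uvm) ≤ zstar := by
        have := weak_duality A b c grp x0 uq (uvp - uvm) hx0
          ⟨fun q => hxx0 (.inl (.inl q)), fun j => ?_⟩
        · linarith [hx0v ▸ this]
        · have h1 := heqj j
          have hsj : 0 ≤ s j := hxx0 (.inr (.inl j))
          have hcomm : ∑ q, A q j * uq q = ∑ q, uq q * A q j :=
            Finset.sum_congr rfl (fun q _ => mul_comm _ _)
          simp only [Pi.sub_apply]
          rw [hcomm]
          linarith
      linarith
  · set x : Fin E → ℝ := fun j => y (.inl j) with hx
    set μ : ℝ := y (.inr ()) with hμ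
    have hμ0 : 0 ≤ μ := by
      have := hy1 (.inr (.inr ()))
      simp only [hv, Fintype.sum_sum_type, Sum.elim_inl, Sum.elim_inr, zero_mul, neg_mul,
        one_mul, Finset.sum_const_zero, Fintype.univ_punit, Finset.sum_singleton] at this
      linarith
    have hxneg : ∀ j, x j ≤ 0 := by
      intro j0
      have := hy1 (.inr (.inl j0))
      simp only [hv, Fintype.sum_sum_type, Sum.elim_inl, Sum.elim_inr, ite_mul, one_mul,
        zero_mul, Finset.sum_ite_eq', Finset.mem_univ, if_true, Fintype.univ_punit,
        Finset.sum_singleton, add_zero, Finset.sum_const_zero] at this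
      linarith
    have hrow : ∀ q, (∑ j, A q j * x j) + b q * μ ≤ 0 := by
      intro q
      have := hy1 (.inl (.inl q))
      simp only [hv, Fintype.sum_sum_type, Sum.elim_inl, Sum.elim_inr,
        Fintype.univ_punit, Finset.sum_singleton] at this
      linarith
    have hgrpsum : ∀ i, (∑ j, if grp j = i then x j else 0) = -μ := by
      intro i
      have h1 := hy1 (.inl (.inr (.inl i)))
      have h2 := hy1 (.inl (.inr (.inr i)))
      simp only [hv, Fintype.sum_sum_type, Sum.elim_inl, Sum.elim_inr, ite_mul, one_mul,
        zero_mul, neg_mul, neg_one_mul, Fintype.univ_punit, Finset.sum_singleton] at h1 h2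
      have hneg : ∑ j, (if grp j = i then -x j else 0) = -∑ j, (if grp j = i then x j else 0) := by
        rw [← Finset.sum_neg_distrib]
        exact Finset.sum_congr rfl (fun j _ => by split <;> simp)
      rw [hneg] at h2
      linarith
    have hobj : 0 < (∑ j, c j * x j) + zstar * μ := by
      have := hy2
      simp only [hw, Fintype.sum_sum_type, Sum.elim_inl, Sum.elim_inr,
        Fintype.univ_punit, Finset.sum_singleton] at this
      linarith
    exfalso
    rcases eq_or_lt_of_le hμ0 with hμz | hμpos
    · -- μ = 0 : unbounded direction
      have hμz' : μ = 0 := hμz.symm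
      set S : ℝ := ∑ j, c j * x j with hS
      have hSpos : 0 < S := by
        have h := hobj
        rw [hμz'] at h
        linarith
      set tt : ℝ := (c ⬝ᵥ x0 - zstar + 1) / S with htt
      have httpos : 0 < tt := by
        apply div_pos _ hSpos
        have := hlb' x0 hx0
        linarith
      set x' : Fin E → ℝ := fun j => x0 j - tt * x j with hx'
      have hfeas : Feas A b grp x' := by
        refine ⟨?_, ?_, ?_⟩
        · intro q
          have h1 := hrow q
          rw [hμz'] at h1
          have h2 := hx0.1 q
          simp only [Matrix.mulVec, dotProduct] at h2 ⊢
          have : ∑ j, A q j * x' j = (∑ j, A q j * x0 j) - tt * ∑ j, A q j * x j := by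
            simp only [hx', mul_sub, Finset.sum_sub_distrib, Finset.mul_sum]
            congr 1
            exact Finset.sum_congr rfl (fun j _ => by ring)
          rw [this]
          nlinarith
        · intro i
          have h1 := hgrpsum i
          rw [hμz'] at h1
          have h2 := hx0.2.1 i
          have : ∑ j, (if grp j = i then x' j else 0)
              = (∑ j, if grp j = i then x0 j else 0) - tt * ∑ j, (if grp j = i then x j else 0) := by
            simp only [hx', Finset.mul_sum, ← Finset.sum_sub_distrib]
            exact Finset.sum_congr rfl (fun j _ => by split <;> ring)
          rw [this, h1, h2]
          ring
        · intro j
          have h1 : x j ≤ 0 := hxneg j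
          have h0 : (0:ℝ) ≤ x0 j := hx0.2.2 j
          simp only [hx', Pi.zero_apply]
          nlinarith [mul_nonpos_of_nonneg_of_nonpos httpos.le h1]
      have hval : c ⬝ᵥ x' = c ⬝ᵥ x0 - tt * S := by
        simp only [dotProduct, hx', hS, Finset.mul_sum, ← Finset.sum_sub_distrib]
        exact Finset.sum_congr rfl (fun j _ => by ring)
      have := hlb' x' hfeas
      rw [hval, htt, div_mul_cancel₀ _ hSpos.ne'] at this
      linarith
    · -- μ > 0 : better feasible point
      set x' : Fin E → ℝ := fun j => -x j / μ with hx'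
      have hfeas : Feas A b grp x' := by
        refine ⟨?_, ?_, ?_⟩
        · intro q
          have h1 := hrow q
          simp only [Matrix.mulVec, dotProduct]
          have : ∑ j, A q j * x' j = -(∑ j, A q j * x j) / μ := by
            simp only [hx', neg_div, Finset.sum_div, ← Finset.sum_neg_distrib]
            exact Finset.sum_congr rfl (fun j _ => by ring)
          rw [this, le_div_iff₀ hμpos]
          nlinarith
        · intro i
          have h1 := hgrpsum i
          have : ∑ j, (if grp j = i then x' j else 0)
              = -(∑ j, if grp j = i then x j else 0) / μ := by
            simp only [hx', neg_div, Finset.sum_div, ← Finset.sum_neg_distrib]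
            exact Finset.sum_congr rfl (fun j _ => by split <;> simp [neg_div])
          rw [this, h1]
          field_simp
        · intro j
          simp only [hx', Pi.zero_apply]
          exact div_nonneg (neg_nonneg.mpr (hxneg j)) hμpos.le
      have hval : c ⬝ᵥ x' < zstar := by
        have : c ⬝ᵥ x' = -(∑ j, c j * x j) / μ := by
          simp only [dotProduct, hx', neg_div, Finset.sum_div, ← Finset.sum_neg_distrib]
          exact Finset.sum_congr rfl (fun j _ => by ring)
        rw [this, div_lt_iff₀ hμpos]
        nlinarith
      have := hlb' x' hfeas
      linarith

/-- Existence of a dual solution achieving the exact reduced cost: for an ideal LP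
formulation with partition constraints (optima attained at integral points for every
cost vector) and any index k belonging to a feasible integral solution, there exists
an optimal dual solution u* with r_k(u*) = R_k = z*_{|k} − z*. -/
theorem stmt5 {m n E : ℕ} (A : Matrix (Fin m) (Fin E) ℝ) (b : Fin m → ℝ)
    (c : Fin E → ℝ) (grp : Fin E → Fin n) (k : Fin E) (zstar zk : ℝ)
    (hz : IsLeast {z | ∃ x : Fin E → ℝ, Feas A b grp x ∧ c ⬝ᵥ x = z} zstar)
    (hzk : IsLeast {z | ∃ x : Fin E → ℝ, Feas A b grp x ∧ x k = 1 ∧ c ⬝ᵥ x = z} zk)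
    (hideal : ∀ c' : Fin E → ℝ, (∃ x0 : Fin E → ℝ, Feas A b grp x0) →
      ∃ xt : Fin E → ℝ, Feas A b grp xt ∧ Integral xt ∧
        ∀ y : Fin E → ℝ, Feas A b grp y → c' ⬝ᵥ xt ≤ c' ⬝ᵥ y)
    (hk : ∃ x : Fin E → ℝ, Feas A b grp x ∧ Integral x ∧ x k = 1) :
    ∃ (uq : Fin m → ℝ) (uv : Fin n → ℝ),
      DualFeas A c grp uq uv ∧ dualObj b uq uv = zstar ∧
      rc A c grp uq uv k = zk - zstar := by
  classical
  obtain ⟨xs, hxs, hxsv⟩ := hz.1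
  obtain ⟨xhat, hxhat, hxhatk, hxhatv⟩ := hzk.1
  have hzk_ge : zstar ≤ zk := hz.2 ⟨xhat, hxhat, hxhatv⟩
  set R : ℝ := zk - zstar with hR
  have hR0 : 0 ≤ R := by simp [hR]; linarith
  set c' : Fin E → ℝ := fun j => if j = k then c k - R else c j with hc'
  have hcdot : ∀ y : Fin E → ℝ, c' ⬝ᵥ y = c ⬝ᵥ y - R * y k := by
    intro y
    simp only [dotProduct, hc']
    have : ∀ j : Fin E, (if j = k then c k - R else c j) * y j
        = c j * y j - (if j = k then R * y j else 0) := by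
      intro j
      by_cases hj : j = k
      · subst hj; simp; ring
      · simp [hj]
    rw [Finset.sum_congr rfl (fun j _ => this j), Finset.sum_sub_distrib]
    congr 1
    rw [Finset.sum_ite_eq' Finset.univ k (fun j => R * y j)]
    simp
  have hne : ∃ x0 : Fin E → ℝ, Feas A b grp x0 := ⟨xs, hxs⟩
  obtain ⟨xt, hxt, hxtInt, hxtmin⟩ := hideal c' hne
  have h1 : zstar ≤ c' ⬝ᵥ xt := by
    rcases hxtInt k with h | h
    · rw [hcdot xt, h]
      have := hz.2 ⟨xt, hxt, rfl⟩
      simpa using this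
    · rw [hcdot xt, h]
      have := hzk.2 ⟨xt, hxt, h, rfl⟩
      simp only [hR, mul_one]
      linarith
  have h2 : c' ⬝ᵥ xhat = zstar := by
    rw [hcdot, hxhatk, hxhatv]
    simp [hR]
  have hzleast' : IsLeast {z | ∃ x : Fin E → ℝ, Feas A b grp x ∧ c' ⬝ᵥ x = z} zstar := by
    constructor
    · exact ⟨xhat, hxhat, h2⟩
    · rintro z ⟨y, hy, rfl⟩
      calc zstar ≤ c' ⬝ᵥ xt := h1
        _ ≤ c' ⬝ᵥ y := hxtmin y hy
  obtain ⟨uq, uv, hdf', hobj⟩ := strong_duality A b c' grp zstar hzleast'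
  have hid := lp_identity A b c' grp xhat uq uv hxhat.2.1
  rw [h2, hobj] at hid
  have hnn : ∀ j ∈ Finset.univ, 0 ≤ rc A c' grp uq uv j * xhat j := by
    intro j _
    refine mul_nonneg ?_ (hxhat.2.2 j)
    have := hdf'.2 j
    simp only [rc]
    linarith
  have hterm2 : 0 ≤ uq ⬝ᵥ (A.mulVec xhat - b) := by
    refine Finset.sum_nonneg (fun q _ => mul_nonneg (hdf'.1 q) ?_)
    have := hxhat.1 q
    simp only [Pi.sub_apply]
    linarith
  have hterm1 : 0 ≤ ∑ j, rc A c' grp uq uv j * xhat j := Finset.sum_nonneg hnn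
  have hsum0 : ∑ j, rc A c' grp uq uv j * xhat j = 0 := by linarith
  have hrck0 : rc A c' grp uq uv k * xhat k = 0 :=
    (Finset.sum_eq_zero_iff_of_nonneg hnn).mp hsum0 k (Finset.mem_univ k)
  have hrck : rc A c' grp uq uv k = 0 := by
    rw [hxhatk, mul_one] at hrck0
    exact hrck0
  have hck : c' k = c k - R := by simp [hc']
  refine ⟨uq, uv, ⟨hdf'.1, fun j => ?_⟩, hobj, ?_⟩
  · have := hdf'.2 j
    by_cases hj : j = k
    · subst hj
      rw [hck] at this
      linarith
    · have : c' j = c j := by simp [hc', hj]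
      have h3 := hdf'.2 j
      rw [this] at h3
      exact h3
  · simp only [rc, hck] at hrck ⊢
    linarith
end

section
/- Characterization (i ⇒ ii): if u* is a dual optimal solution with r_k(u*) = R_k, then there exists a minimum-cost integral solution S of the restricted problem (containing k) such that r_j(u*) = 0 for every j ∈ S with j ≠ k. -/
open Matrix

/-- Characterization (i ⇒ ii): if u* is dual optimal with r_k(u*) = R_k, then there is a
minimum-cost integral solution of the restricted problem (containing k) on which all
reduced costs other than that of k vanish. -/
theorem stmt6 {m n E : ℕ} (A : Matrix (Fin m) (Fin E) ℝ) (b : Fin m → ℝ)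
    (c : Fin E → ℝ) (grp : Fin E → Fin n) (k : Fin E) (zstar zk : ℝ)
    (hz : IsLeast {z | ∃ x : Fin E → ℝ, Feas A b grp x ∧ c ⬝ᵥ x = z} zstar)
    (hzk : IsLeast {z | ∃ x : Fin E → ℝ, Feas A b grp x ∧ x k = 1 ∧ c ⬝ᵥ x = z} zk)
    (hideal : ∀ c' : Fin E → ℝ, (∃ x0 : Fin E → ℝ, Feas A b grp x0) →
      ∃ xt : Fin E → ℝ, Feas A b grp xt ∧ Integral xt ∧
        ∀ y : Fin E → ℝ, Feas A b grp y → c' ⬝ᵥ xt ≤ c' ⬝ᵥ y)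
    (uq : Fin m → ℝ) (uv : Fin n → ℝ)
    (hu : DualFeas A c grp uq uv) (hopt : dualObj b uq uv = zstar)
    (hrk : rc A c grp uq uv k = zk - zstar) :
    ∃ x : Fin E → ℝ, Feas A b grp x ∧ Integral x ∧ x k = 1 ∧ c ⬝ᵥ x = zk ∧
      ∀ j : Fin E, j ≠ k → x j = 1 → rc A c grp uq uv j = 0 := by
  classical
  obtain ⟨⟨xk, hxkF, hxk1, hxkc⟩, hzk_lb⟩ := hzk
  set M : ℝ := zk - zstar + 1 with hM
  set c' : Fin E → ℝ := fun j => c j - if j = k then M else 0 with hc'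
  have hdot : ∀ y : Fin E → ℝ, c' ⬝ᵥ y = c ⬝ᵥ y - M * y k := by
    intro y
    simp only [dotProduct, hc', sub_mul]
    rw [Finset.sum_sub_distrib]
    congr 1
    simp [ite_mul, Finset.sum_ite_eq']
  obtain ⟨xt, hxtF, hxtI, hxtopt⟩ := hideal c' ⟨xk, hxkF⟩
  have hzst_le : zstar ≤ c ⬝ᵥ xt := hz.2 ⟨xt, hxtF, rfl⟩
  have hxtk : xt k = 1 := by
    rcases hxtI k with h0 | h1
    · exfalso
      have h1 := hxtopt xk hxkF
      rw [hdot, hdot, hxk1, hxkc, h0] at h1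
      simp only [mul_zero, mul_one, sub_zero] at h1
      linarith
    · exact h1
  have hle : c ⬝ᵥ xt ≤ zk := by
    have h1 := hxtopt xk hxkF
    rw [hdot, hdot, hxk1, hxkc, hxtk] at h1
    linarith
  have hge : zk ≤ c ⬝ᵥ xt := hzk_lb ⟨xt, hxtF, hxtk, rfl⟩
  have hcz : c ⬝ᵥ xt = zk := le_antisymm hle hge
  -- group sum identity
  have hgroup : ∑ j : Fin E, xt j * uv (grp j) = ∑ i : Fin n, uv i := by
    have : ∑ i : Fin n, uv i
        = ∑ i : Fin n, ∑ j : Fin E, (if grp j = i then uv i * xt j else 0) := by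
      apply Finset.sum_congr rfl
      intro i _
      have hcalc : (∑ j : Fin E, if grp j = i then uv i * xt j else 0)
          = uv i * ∑ j : Fin E, (if grp j = i then xt j else 0) := by
        rw [Finset.mul_sum]
        exact Finset.sum_congr rfl (fun j _ => by split <;> simp)
      rw [hcalc, hxtF.2.1 i, mul_one]
    rw [this, Finset.sum_comm]
    apply Finset.sum_congr rfl
    intro j _
    rw [Finset.sum_ite_eq]
    simp [mul_comm]
  -- the decomposition
  have hAterm : ∑ j : Fin E, xt j * (∑ q : Fin m, A q j * uq q)
      = uq ⬝ᵥ A.mulVec xt := by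
    simp only [dotProduct, mulVec, Finset.mul_sum]
    rw [Finset.sum_comm]
    apply Finset.sum_congr rfl
    intro j _
    apply Finset.sum_congr rfl
    intro q _
    ring
  have hdecomp : c ⬝ᵥ xt
      = (∑ j : Fin E, xt j * rc A c grp uq uv j) + uq ⬝ᵥ A.mulVec xt
        + ∑ i : Fin n, uv i := by
    rw [← hgroup, ← hAterm, dotProduct]
    rw [← Finset.sum_add_distrib, ← Finset.sum_add_distrib]
    apply Finset.sum_congr rfl
    intro j _
    simp only [rc]
    ring
  have hrcnn : ∀ j : Fin E, 0 ≤ rc A c grp uq uv j := by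
    intro j
    have := hu.2 j
    simp only [rc]
    linarith
  have hAx : uq ⬝ᵥ b ≤ uq ⬝ᵥ A.mulVec xt := by
    apply Finset.sum_le_sum
    intro q _
    exact mul_le_mul_of_nonneg_left (hxtF.1 q) (hu.1 q)
  have hnn : ∀ j ∈ (Finset.univ : Finset (Fin E)).erase k,
      0 ≤ xt j * rc A c grp uq uv j := by
    intro j _
    exact mul_nonneg (hxtF.2.2 j) (hrcnn j)
  have hsplit : ∑ j ∈ (Finset.univ : Finset (Fin E)).erase k,
        xt j * rc A c grp uq uv j + xt k * rc A c grp uq uv k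
      = ∑ j : Fin E, xt j * rc A c grp uq uv j :=
    Finset.sum_erase_add _ _ (Finset.mem_univ k)
  have hR0 : ∑ j ∈ (Finset.univ : Finset (Fin E)).erase k,
      xt j * rc A c grp uq uv j = 0 := by
    have hdu : b ⬝ᵥ uq + ∑ i : Fin n, uv i = zstar := hopt
    have hcomm : b ⬝ᵥ uq = uq ⬝ᵥ b := dotProduct_comm b uq
    have hRnn : 0 ≤ ∑ j ∈ (Finset.univ : Finset (Fin E)).erase k,
        xt j * rc A c grp uq uv j := Finset.sum_nonneg hnn
    have := hdecomp
    rw [hcz, ← hsplit, hxtk, one_mul, hrk] at this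
    nlinarith [hAx]
  refine ⟨xt, hxtF, hxtI, hxtk, hcz, ?_⟩
  intro j hj hj1
  have := (Finset.sum_eq_zero_iff_of_nonneg hnn).1 hR0 j
    (Finset.mem_erase.2 ⟨hj, Finset.mem_univ j⟩)
  rw [hj1, one_mul] at this
  exact this
end

section
/- Characterization (i ⇒ iii): if u* is a dual optimal solution with r_k(u*) = R_k, then for EVERY minimum-cost integral solution S of the restricted problem (every support of minimal cost containing k), all reduced costs r_j(u*) for j ∈ S, j ≠ k, vanish. -/
open Matrix

/-- Characterization (i ⇒ iii): if u* is dual optimal with r_k(u*) = R_k, then for EVERY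
minimum-cost integral solution of the restricted problem (every support of minimal cost
containing k), all reduced costs r_j(u*), j ≠ k in the support, vanish. -/
theorem stmt8 {m n E : ℕ} (A : Matrix (Fin m) (Fin E) ℝ) (b : Fin m → ℝ)
    (c : Fin E → ℝ) (grp : Fin E → Fin n) (k : Fin E) (zstar zk : ℝ)
    (hz : IsLeast {z | ∃ x : Fin E → ℝ, Feas A b grp x ∧ c ⬝ᵥ x = z} zstar)
    (hzk : IsLeast {z | ∃ x : Fin E → ℝ, Feas A b grp x ∧ x k = 1 ∧ c ⬝ᵥ x = z} zk)
    (uq : Fin m → ℝ) (uv : Fin n → ℝ)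
    (hu : DualFeas A c grp uq uv) (hopt : dualObj b uq uv = zstar)
    (hrk : rc A c grp uq uv k = zk - zstar) :
    ∀ x : Fin E → ℝ, Feas A b grp x → Integral x → x k = 1 → c ⬝ᵥ x = zk →
      ∀ j : Fin E, j ≠ k → x j = 1 → rc A c grp uq uv j = 0 := by
  intro x hx hxi hxk hcx j hjk hxj
  obtain ⟨hAx, hpart, hx0⟩ := hx
  obtain ⟨huq0, hdual⟩ := hu
  have hrc0 : ∀ j, 0 ≤ rc A c grp uq uv j := by
    intro j; have := hdual j; simp only [rc]; linarith
  -- decomposition of the objective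
  have h1 : ∑ j, x j * uv (grp j) = ∑ i : Fin n, uv i := by
    have hjj : ∀ j : Fin E, x j * uv (grp j)
        = ∑ i : Fin n, if grp j = i then x j * uv i else 0 := by
      intro j; simp
    rw [Finset.sum_congr rfl (fun j _ => hjj j), Finset.sum_comm]
    refine Finset.sum_congr rfl fun i _ => ?_
    calc ∑ j, (if grp j = i then x j * uv i else 0)
        = uv i * ∑ j, (if grp j = i then x j else 0) := by
          rw [Finset.mul_sum]
          refine Finset.sum_congr rfl fun j _ => ?_
          split <;> ring
      _ = uv i := by rw [hpart i, mul_one]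
  have h2 : ∑ j, x j * (∑ q, A q j * uq q) = ∑ q, uq q * A.mulVec x q := by
    simp only [Finset.mul_sum, Matrix.mulVec, dotProduct]
    rw [Finset.sum_comm]
    refine Finset.sum_congr rfl fun q _ => ?_
    refine Finset.sum_congr rfl fun j _ => ?_
    ring
  have hdec : c ⬝ᵥ x = (∑ j, x j * rc A c grp uq uv j) + (∑ i, uv i)
      + (∑ q, uq q * A.mulVec x q) := by
    simp only [rc, dotProduct, mul_sub]
    rw [Finset.sum_sub_distrib, Finset.sum_sub_distrib, h1, h2]
    ring_nf
    refine Finset.sum_congr rfl fun j _ => ?_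
    ring
  have hbu : b ⬝ᵥ uq ≤ ∑ q, uq q * A.mulVec x q := by
    simp only [dotProduct]
    refine Finset.sum_le_sum fun q _ => ?_
    have := mul_le_mul_of_nonneg_left (hAx q) (huq0 q)
    linarith [this]
  have hS : (∑ j, x j * rc A c grp uq uv j) ≤ zk - zstar := by
    have : zstar = b ⬝ᵥ uq + ∑ i, uv i := by rw [← hopt]; rfl
    rw [hcx] at hdec
    linarith
  have hsplit : (∑ j, x j * rc A c grp uq uv j)
      = x k * rc A c grp uq uv k
      + ∑ j ∈ Finset.univ.erase k, x j * rc A c grp uq uv j := by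
    rw [← Finset.add_sum_erase _ _ (Finset.mem_univ k)]
  have hrest : ∑ j ∈ Finset.univ.erase k, x j * rc A c grp uq uv j ≤ 0 := by
    rw [hsplit, hxk, hrk, one_mul] at hS
    linarith
  have hzero : ∀ j ∈ Finset.univ.erase k, x j * rc A c grp uq uv j = 0 := by
    have hnn : ∀ j ∈ Finset.univ.erase k, 0 ≤ x j * rc A c grp uq uv j :=
      fun j _ => mul_nonneg (hx0 j) (hrc0 j)
    have := le_antisymm hrest (Finset.sum_nonneg hnn)
    exact (Finset.sum_eq_zero_iff_of_nonneg hnn).mp this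
  have := hzero j (Finset.mem_erase.mpr ⟨hjk, Finset.mem_univ j⟩)
  rw [hxj, one_mul] at this
  exact this
end

section
/- Incompatible indices share one dual solution: let I be a set of indices such that no two distinct elements of I belong to the same feasible integral solution (pairwise incompatible), and such that each element of I belongs to some feasible integral solution. Then there exists a single dual optimal solution u* with r_{kl}(u*) = R_{kl} for every kl ∈ I. -/
open Matrix

namespace Stmt11Aux

variable {k : ℕ}

/-- pairing on (Fin k → ℝ) × ℝ -/
def dp (u v : (Fin k → ℝ) × ℝ) : ℝ := u.1 ⬝ᵥ v.1 + u.2 * v.2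

lemma dp_pos {u : (Fin k → ℝ) × ℝ} (h : u ≠ 0) : 0 < dp u u := by
  have h1 : 0 ≤ u.1 ⬝ᵥ u.1 := by
    simp only [dotProduct]
    exact Finset.sum_nonneg fun i _ => mul_self_nonneg _
  have h2 : 0 ≤ u.2 * u.2 := mul_self_nonneg _
  rcases eq_or_ne u.1 0 with h3 | h3
  · have h4 : u.2 ≠ 0 := by
      intro h4; exact h (Prod.ext h3 h4)
    have : 0 < u.2 * u.2 := mul_self_pos.2 h4
    unfold dp; nlinarith
  · have : 0 < u.1 ⬝ᵥ u.1 := by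
      rcases lt_or_eq_of_le h1 with h | h
      · exact h
      · exact absurd ((dotProduct_self_eq_zero).1 h.symm) h3
    unfold dp; nlinarith

lemma dp_sub_smul_left (u a w : (Fin k → ℝ) × ℝ) (μ : ℝ) :
    dp (u - μ • a) w = dp u w - μ * dp a w := by
  simp [dp, sub_dotProduct, smul_dotProduct, smul_eq_mul]
  ring

lemma dp_sub_smul_right (u a w : (Fin k → ℝ) × ℝ) (μ : ℝ) :
    dp w (u - μ • a) = dp w u - μ * dp w a := by
  simp [dp, dotProduct_sub, dotProduct_smul, smul_eq_mul]
  ring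

def InCone : List ((Fin k → ℝ) × ℝ) → ((Fin k → ℝ) × ℝ) → Prop
  | [], v => v = 0
  | a :: L, v => ∃ μ : ℝ, 0 ≤ μ ∧ InCone L (v - μ • a)

lemma lemA (w a : (Fin k → ℝ) × ℝ) (haw : dp a w < 0) :
    ∀ (L : List ((Fin k → ℝ) × ℝ)) (u : (Fin k → ℝ) × ℝ),
      (∀ x ∈ L, 0 ≤ dp x w) →
      InCone (L.map (fun v => v - (dp v w / dp a w) • a)) (u - (dp u w / dp a w) • a) →
      ∃ μ : ℝ, dp u w / dp a w ≤ μ ∧ InCone L (u - μ • a)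
  | [], u, _, h => by
      refine ⟨dp u w / dp a w, le_refl _, ?_⟩
      exact h
  | x :: L, u, hL, h => by
      obtain ⟨ν, hν, h2⟩ := h
      have hxw : 0 ≤ dp x w := hL x (List.mem_cons_self)
      have key : (u - (dp u w / dp a w) • a) - ν • (x - (dp x w / dp a w) • a)
          = (u - ν • x) - (dp (u - ν • x) w / dp a w) • a := by
        rw [dp_sub_smul_left, sub_div]
        module
      rw [key] at h2
      obtain ⟨μ, hμ1, hμ2⟩ := lemA w a haw L (u - ν • x)
        (fun y hy => hL y (List.mem_cons_of_mem _ hy)) h2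
      refine ⟨μ, ?_, ⟨ν, hν, ?_⟩⟩
      · have h3 : dp (u - ν • x) w = dp u w - ν * dp x w := dp_sub_smul_left u x w ν
        have h4 : dp u w / dp a w ≤ dp (u - ν • x) w / dp a w := by
          rw [h3, sub_div]
          have : 0 ≤ ν * dp x w := mul_nonneg hν hxw
          have h5 : ν * dp x w / dp a w ≤ 0 := div_nonpos_of_nonneg_of_nonpos this haw.le
          linarith
        linarith
      · have : u - μ • a - ν • x = u - ν • x - μ • a := by module
        rw [this]; exact hμ2

theorem farkasAux : ∀ (N : ℕ) (L : List ((Fin k → ℝ) × ℝ)), L.length ≤ N →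
    ∀ v, ¬ InCone L v → ∃ w, (∀ a ∈ L, 0 ≤ dp a w) ∧ dp v w < 0
  | N, [], _, v, hv => by
      have hv0 : v ≠ 0 := hv
      refine ⟨-v, fun a ha => absurd ha List.not_mem_nil, ?_⟩
      have h1 : dp v (-v) = -(dp v v) := by simp [dp]; ring
      rw [h1]
      linarith [dp_pos hv0]
  | 0, a :: L, hlen, v, hv => by simp at hlen
  | (N+1), a :: L, hlen, v, hv => by
      have hlen' : L.length ≤ N := by simpa using hlen
      have hnL : ¬ InCone L v := by
        intro h; exact hv ⟨0, le_refl 0, by simpa using h⟩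
      obtain ⟨w, hw1, hw2⟩ := farkasAux N L hlen' v hnL
      rcases le_or_gt 0 (dp a w) with haw | haw
      · exact ⟨w, fun x hx => by
          rcases List.mem_cons.1 hx with h | h
          · subst h; exact haw
          · exact hw1 x h, hw2⟩
      · -- project
        set proj : (Fin k → ℝ) × ℝ → (Fin k → ℝ) × ℝ := fun v => v - (dp v w / dp a w) • a with hproj
        have hnot : ¬ InCone (L.map proj) (proj v) := by
          intro h
          obtain ⟨μ, hμ1, hμ2⟩ := lemA w a haw L v hw1 h
          have hpos : 0 < dp v w / dp a w := div_pos_of_neg_of_neg hw2 haw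
          exact hv ⟨μ, le_of_lt (lt_of_lt_of_le hpos hμ1), hμ2⟩
        have hlen2 : (L.map proj).length ≤ N := by simpa using hlen'
        obtain ⟨w', hw'1, hw'2⟩ := farkasAux N (L.map proj) hlen2 (proj v) hnot
        refine ⟨w' - (dp a w' / dp a w) • w, ?_, ?_⟩
        · intro x hx
          have hne : dp a w ≠ 0 := ne_of_lt haw
          rcases List.mem_cons.1 hx with h | h
          · rw [h, dp_sub_smul_right, div_mul_cancel₀ _ hne]
            simp
          · have h2 := hw'1 (proj x) (List.mem_map_of_mem h)
            rw [dp_sub_smul_right]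
            rw [hproj] at h2
            simp only at h2
            rw [dp_sub_smul_left] at h2
            have h3 : dp x w / dp a w * dp a w' = dp a w' / dp a w * dp x w := by
              rw [div_mul_eq_mul_div, div_mul_eq_mul_div, mul_comm]
            linarith [h3 ▸ h2]
        · have hne : dp a w ≠ 0 := ne_of_lt haw
          have h2 := hw'2
          rw [hproj] at h2
          simp only at h2
          rw [dp_sub_smul_left] at h2
          rw [dp_sub_smul_right]
          have h3 : dp v w / dp a w * dp a w' = dp a w' / dp a w * dp v w := by
            rw [div_mul_eq_mul_div, div_mul_eq_mul_div, mul_comm]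
          linarith [h3 ▸ h2]


theorem farkas (L : List ((Fin k → ℝ) × ℝ)) (v : (Fin k → ℝ) × ℝ) (h : ¬ InCone L v) :
    ∃ w, (∀ a ∈ L, 0 ≤ dp a w) ∧ dp v w < 0 :=
  farkasAux L.length L (le_refl _) v h

lemma InCone_append : ∀ (L1 L2 : List ((Fin k → ℝ) × ℝ)) (v : (Fin k → ℝ) × ℝ),
    InCone (L1 ++ L2) v ↔ ∃ v1 v2, v = v1 + v2 ∧ InCone L1 v1 ∧ InCone L2 v2
  | [], L2, v => by
      constructor
      · intro h; exact ⟨0, v, by simp, rfl, by simpa using h⟩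
      · rintro ⟨v1, v2, rfl, h1, h2⟩
        have : v1 = 0 := h1
        simpa [this] using h2
  | a :: L1, L2, v => by
      constructor
      · rintro ⟨μ, hμ, h⟩
        obtain ⟨v1, v2, he, h1, h2⟩ := (InCone_append L1 L2 _).1 h
        exact ⟨v1 + μ • a, v2, by have := he; rw [sub_eq_iff_eq_add] at this; rw [this]; abel, ⟨μ, hμ, by simpa using h1⟩, h2⟩
      · rintro ⟨v1, v2, rfl, ⟨μ, hμ, h1⟩, h2⟩
        exact ⟨μ, hμ, (InCone_append L1 L2 _).2 ⟨v1 - μ • a, v2, by abel, h1, h2⟩⟩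

lemma InCone_ofFn : ∀ (p : ℕ) (f : Fin p → (Fin k → ℝ) × ℝ) (v : (Fin k → ℝ) × ℝ),
    InCone (List.ofFn f) v ↔ ∃ lam : Fin p → ℝ, (∀ i, 0 ≤ lam i) ∧ v = ∑ i, lam i • f i
  | 0, f, v => by
      simp only [List.ofFn_zero]
      constructor
      · intro h; exact ⟨fun i => 0, fun i => le_refl 0, by simpa [Finset.sum_empty, InCone] using h⟩
      · rintro ⟨lam, _, rfl⟩; simp [InCone]
  | p + 1, f, v => by
      rw [List.ofFn_succ]
      constructor
      · rintro ⟨μ, hμ, h⟩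
        obtain ⟨lam, hlam, he⟩ := (InCone_ofFn p (f ∘ Fin.succ) _).1 h
        refine ⟨Fin.cons μ lam, ?_, ?_⟩
        · intro i; induction i using Fin.cases with
          | zero => simpa using hμ
          | succ i => simpa using hlam i
        · rw [Fin.sum_univ_succ]
          simp only [Fin.cons_zero, Fin.cons_succ]
          have h2 : v - μ • f 0 = ∑ i, lam i • (f ∘ Fin.succ) i := he
          rw [sub_eq_iff_eq_add] at h2
          rw [h2]
          simp only [Function.comp]
          abel
      · rintro ⟨lam, hlam, rfl⟩
        refine ⟨lam 0, hlam 0, (InCone_ofFn p (f ∘ Fin.succ) _).2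
          ⟨fun i => lam i.succ, fun i => hlam _, ?_⟩⟩
        rw [Fin.sum_univ_succ]
        simp

lemma sum_grp_mul {n E : ℕ} (grp : Fin E → Fin n) (x : Fin E → ℝ)
    (hx : ∀ i, (∑ j : Fin E, if grp j = i then x j else 0) = 1) (uv : Fin n → ℝ) :
    ∑ j : Fin E, uv (grp j) * x j = ∑ i : Fin n, uv i := by
  have h1 : ∀ j : Fin E, uv (grp j) * x j
      = ∑ i : Fin n, if grp j = i then uv i * x j else 0 := by
    intro j
    rw [Finset.sum_ite_eq Finset.univ (grp j) (fun i => uv i * x j)]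
    simp
  rw [Finset.sum_congr rfl (fun j _ => h1 j), Finset.sum_comm]
  refine Finset.sum_congr rfl fun i _ => ?_
  have : ∀ j : Fin E, (if grp j = i then uv i * x j else 0)
      = uv i * (if grp j = i then x j else 0) := by
    intro j; split <;> simp
  rw [Finset.sum_congr rfl (fun j _ => this j), ← Finset.mul_sum, hx i, mul_one]

lemma cs_identity {m n E : ℕ} (A : Matrix (Fin m) (Fin E) ℝ) (b : Fin m → ℝ)
    (c : Fin E → ℝ) (grp : Fin E → Fin n) (uq : Fin m → ℝ) (uv : Fin n → ℝ)
    (x : Fin E → ℝ) (hx : ∀ i, (∑ j : Fin E, if grp j = i then x j else 0) = 1) :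
    c ⬝ᵥ x - dualObj b uq uv
      = (∑ j : Fin E, rc A c grp uq uv j * x j)
        + ∑ q : Fin m, uq q * (A.mulVec x q - b q) := by
  have h1 : ∑ j : Fin E, rc A c grp uq uv j * x j
      = (∑ j : Fin E, c j * x j) - (∑ i : Fin n, uv i)
        - ∑ j : Fin E, ∑ q : Fin m, A q j * uq q * x j := by
    simp only [rc, sub_mul]
    rw [Finset.sum_sub_distrib, Finset.sum_sub_distrib, sum_grp_mul grp x hx uv]
    congr 1
    exact Finset.sum_congr rfl fun j _ => Finset.sum_mul ..
  have h2 : ∑ q : Fin m, uq q * (A.mulVec x q - b q)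
      = (∑ q : Fin m, ∑ j : Fin E, A q j * uq q * x j) - ∑ q : Fin m, uq q * b q := by
    simp only [Matrix.mulVec, dotProduct, mul_sub, Finset.mul_sum]
    rw [Finset.sum_sub_distrib]
    congr 1
    exact Finset.sum_congr rfl fun q _ => Finset.sum_congr rfl fun j _ => by ring
  rw [h1, h2, Finset.sum_comm (f := fun j q => A q j * uq q * x j)]
  simp only [dotProduct, dualObj]
  have h3 : ∑ q : Fin m, uq q * b q = ∑ q : Fin m, b q * uq q :=
    Finset.sum_congr rfl fun q _ => mul_comm _ _
  rw [h3]
  ring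


end Stmt11Aux

set_option maxHeartbeats 1000000 in
open Stmt11Aux in
/-- Incompatible indices share one dual solution. -/
theorem stmt11 {m n E : ℕ} (A : Matrix (Fin m) (Fin E) ℝ) (b : Fin m → ℝ)
    (c : Fin E → ℝ) (grp : Fin E → Fin n) (zstar : ℝ)
    (hz : IsLeast {z | ∃ x : Fin E → ℝ, Feas A b grp x ∧ c ⬝ᵥ x = z} zstar)
    (hideal : ∀ c' : Fin E → ℝ, (∃ x0 : Fin E → ℝ, Feas A b grp x0) →
      ∃ xt : Fin E → ℝ, Feas A b grp xt ∧ Integral xt ∧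
        ∀ y : Fin E → ℝ, Feas A b grp y → c' ⬝ᵥ xt ≤ c' ⬝ᵥ y)
    (I : Finset (Fin E))
    (hinc : ∀ x : Fin E → ℝ, Feas A b grp x → Integral x →
      ∀ j ∈ I, ∀ j' ∈ I, x j = 1 → x j' = 1 → j = j')
    (hmem : ∀ j ∈ I, ∃ x : Fin E → ℝ, Feas A b grp x ∧ Integral x ∧ x j = 1)
    (R : Fin E → ℝ)
    (hR : ∀ j ∈ I,
      IsLeast {z | ∃ x : Fin E → ℝ, Feas A b grp x ∧ x j = 1 ∧ c ⬝ᵥ x = z}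
        (zstar + R j)) :
    ∃ (uq : Fin m → ℝ) (uv : Fin n → ℝ),
      DualFeas A c grp uq uv ∧ dualObj b uq uv = zstar ∧
      ∀ j ∈ I, rc A c grp uq uv j = R j := by
  obtain ⟨⟨xs, hxs, hxsz⟩, hlb⟩ := hz
  have hfeas : ∃ x0 : Fin E → ℝ, Feas A b grp x0 := ⟨xs, hxs⟩
  have hRnn : ∀ j ∈ I, 0 ≤ R j := by
    intro j hj
    obtain ⟨⟨x, hx, _, hcx⟩, _⟩ := hR j hj
    have := hlb ⟨x, hx, hcx⟩
    linarith
  set ct : Fin E → ℝ := fun j => c j - (if j ∈ I then R j else 0) with hct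
  have hctexp : ∀ x : Fin E → ℝ,
      ct ⬝ᵥ x = c ⬝ᵥ x - ∑ j : Fin E, (if j ∈ I then R j else 0) * x j := by
    intro x
    simp only [hct, dotProduct, sub_mul]
    rw [Finset.sum_sub_distrib]
  -- lower bound for the perturbed cost
  have hlow : ∀ y : Fin E → ℝ, Feas A b grp y → zstar ≤ ct ⬝ᵥ y := by
    obtain ⟨xt, hxt, hint, hopt⟩ := hideal ct hfeas
    have key : zstar ≤ ct ⬝ᵥ xt := by
      rw [hctexp]
      by_cases hone : ∃ j0 ∈ I, xt j0 = 1
      · obtain ⟨j0, hj0, hj01⟩ := hone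
        have hsum : ∑ j : Fin E, (if j ∈ I then R j else 0) * xt j = R j0 := by
          rw [Finset.sum_eq_single j0]
          · rw [if_pos hj0, hj01, mul_one]
          · intro j _ hne
            by_cases hjI : j ∈ I
            · rcases hint j with h0 | h1
              · rw [h0, mul_zero]
              · exact absurd (hinc xt hxt hint j hjI j0 hj0 h1 hj01) hne
            · rw [if_neg hjI, zero_mul]
          · intro h; exact absurd (Finset.mem_univ j0) h
        have hge : zstar + R j0 ≤ c ⬝ᵥ xt := (hR j0 hj0).2 ⟨xt, hxt, hj01, rfl⟩
        rw [hsum]; linarith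
      · push_neg at hone
        have hsum : ∑ j : Fin E, (if j ∈ I then R j else 0) * xt j = 0 := by
          refine Finset.sum_eq_zero fun j _ => ?_
          by_cases hjI : j ∈ I
          · rcases hint j with h0 | h1
            · rw [h0, mul_zero]
            · exact absurd h1 (hone j hjI)
          · rw [if_neg hjI, zero_mul]
        have := hlb ⟨xt, hxt, rfl⟩
        rw [hsum]; linarith
    exact fun y hy => key.trans (hopt y hy)
  -- Farkas setup
  set gi : Fin n → (Fin E → ℝ) := fun i j => if grp j = i then 1 else 0 with hgi
  set Lg : List ((Fin E → ℝ) × ℝ) := List.ofFn (fun q : Fin m => ((fun j => A q j), b q)) with hLg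
  set Lh : List ((Fin E → ℝ) × ℝ) := List.ofFn (fun i : Fin n => (gi i, (1:ℝ))) with hLh
  set Lh' : List ((Fin E → ℝ) × ℝ) := List.ofFn (fun i : Fin n => (-(gi i), (-1:ℝ))) with hLh'
  set Le : List ((Fin E → ℝ) × ℝ) :=
    List.ofFn (fun j0 : Fin E => ((fun j => if j = j0 then (1:ℝ) else 0), (0:ℝ))) with hLe
  have hgidot : ∀ (i : Fin n) (y : Fin E → ℝ),
      gi i ⬝ᵥ y = ∑ j : Fin E, if grp j = i then y j else 0 := by
    intro i y
    refine Finset.sum_congr rfl fun j _ => ?_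
    simp only [hgi]
    split <;> simp
  have hcone : InCone (Lg ++ (Lh ++ (Lh' ++ Le))) (ct, zstar) := by
    by_contra hnc
    obtain ⟨w, hw1, hw2⟩ := farkas _ _ hnc
    set y := w.1 with hy
    set t := w.2 with htdef
    have hgq : ∀ q : Fin m, 0 ≤ (fun j => A q j) ⬝ᵥ y + b q * t := by
      intro q
      exact hw1 _ (List.mem_append_left _ (List.mem_ofFn.2 ⟨q, rfl⟩))
    have hgrp1 : ∀ i : Fin n, 0 ≤ gi i ⬝ᵥ y + 1 * t := fun i =>
      hw1 _ (List.mem_append_right _ (List.mem_append_left _ (List.mem_ofFn.2 ⟨i, rfl⟩)))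
    have hgrp2 : ∀ i : Fin n, 0 ≤ (-(gi i)) ⬝ᵥ y + (-1) * t := fun i =>
      hw1 _ (List.mem_append_right _ (List.mem_append_right _
        (List.mem_append_left _ (List.mem_ofFn.2 ⟨i, rfl⟩))))
    have hgrp : ∀ i : Fin n, gi i ⬝ᵥ y = -t := by
      intro i
      have h1 := hgrp1 i
      have h2 := hgrp2 i
      rw [neg_dotProduct] at h2
      linarith
    have hynn : ∀ j0 : Fin E, 0 ≤ y j0 := by
      intro j0
      have h := hw1 _ (List.mem_append_right _ (List.mem_append_right _
        (List.mem_append_right _ (List.mem_ofFn.2 ⟨j0, rfl⟩))))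
      have hdot : (fun j => if j = j0 then (1:ℝ) else 0) ⬝ᵥ y = y j0 := by
        have : ∀ j : Fin E, (if j = j0 then (1:ℝ) else 0) * y j
            = if j = j0 then y j else 0 := by intro j; split <;> simp
        rw [show (fun j => if j = j0 then (1:ℝ) else 0) ⬝ᵥ y
            = ∑ j : Fin E, if j = j0 then y j else 0 from
          Finset.sum_congr rfl fun j _ => this j]
        rw [Finset.sum_ite_eq' Finset.univ j0 (fun j => y j)]
        simp
      simpa [dp, ← hy, hdot] using h
    have hobj : ct ⬝ᵥ y + zstar * t < 0 := hw2
    rcases lt_trichotomy t 0 with ht | ht | ht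
    · -- t < 0 : scale to a feasible point
      have hnt : 0 < -t := by linarith
      have hfeas' : Feas A b grp (fun j => y j * (-t)⁻¹) := by
        refine ⟨?_, ?_, ?_⟩
        · intro q
          have hmv : A.mulVec (fun j => y j * (-t)⁻¹) q
              = ((fun j => A q j) ⬝ᵥ y) * (-t)⁻¹ := by
            simp only [Matrix.mulVec, dotProduct, Finset.sum_mul]
            exact Finset.sum_congr rfl fun j _ => by ring
          rw [hmv]
          have h1 : b q * (-t) ≤ (fun j => A q j) ⬝ᵥ y := by
            have := hgq q; nlinarith [hgq q]
          calc b q = b q * (-t) * (-t)⁻¹ := (mul_inv_cancel_right₀ hnt.ne' (b q)).symm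
            _ ≤ ((fun j => A q j) ⬝ᵥ y) * (-t)⁻¹ :=
                mul_le_mul_of_nonneg_right h1 (inv_nonneg.2 hnt.le)
        · intro i
          have h1 : ∑ j : Fin E, (if grp j = i then y j * (-t)⁻¹ else 0)
              = (∑ j : Fin E, if grp j = i then y j else 0) * (-t)⁻¹ := by
            rw [Finset.sum_mul]
            exact Finset.sum_congr rfl fun j _ => by split <;> simp
          rw [h1, ← hgidot, hgrp i]
          exact mul_inv_cancel₀ hnt.ne' 
        · intro j
          exact mul_nonneg (hynn j) (inv_nonneg.2 hnt.le)
      have h2 := hlow _ hfeas'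
      have h3 : ct ⬝ᵥ (fun j => y j * (-t)⁻¹) = (ct ⬝ᵥ y) * (-t)⁻¹ := by
        simp only [dotProduct, Finset.sum_mul]
        exact Finset.sum_congr rfl fun j _ => by ring
      rw [h3] at h2
      have h4 : zstar * (-t) ≤ ct ⬝ᵥ y := by
        have := mul_le_mul_of_nonneg_right h2 hnt.le
        calc zstar * (-t) ≤ (ct ⬝ᵥ y) * (-t)⁻¹ * (-t) := this
          _ = ct ⬝ᵥ y := inv_mul_cancel_right₀ hnt.ne' _
      nlinarith
    · -- t = 0
      have hy0 : ∀ j0 : Fin E, y j0 = 0 := by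
        intro j0
        have hs : ∑ j : Fin E, (if grp j = grp j0 then y j else 0) = 0 := by
          rw [← hgidot, hgrp (grp j0), ht, neg_zero]
        have hterm : ∀ j ∈ Finset.univ (α := Fin E),
            0 ≤ (if grp j = grp j0 then y j else 0) := by
          intro j _; split; exacts [hynn j, le_refl 0]
        have := (Finset.sum_eq_zero_iff_of_nonneg hterm).1 hs j0 (Finset.mem_univ j0)
        simpa using this
      have : y = 0 := funext hy0
      rw [this, dotProduct_zero, ht, mul_zero, add_zero] at hobj
      exact lt_irrefl 0 hobj
    · -- t > 0
      by_cases hn : Nonempty (Fin n)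
      · obtain ⟨i0⟩ := hn
        have h1 : 0 ≤ gi i0 ⬝ᵥ y := by
          rw [hgidot]
          refine Finset.sum_nonneg fun j _ => ?_
          split; exacts [hynn j, le_refl 0]
        have h2 := hgrp i0
        linarith
      · have hE : IsEmpty (Fin E) := ⟨fun j => (hn ⟨grp j⟩).elim⟩
        have h1 : ct ⬝ᵥ y = 0 := by
          simp only [dotProduct]
          rw [Finset.univ_eq_empty, Finset.sum_empty]
        have h2 : zstar = 0 := by
          rw [← hxsz]
          simp only [dotProduct]
          rw [Finset.univ_eq_empty, Finset.sum_empty]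
        rw [h1, h2, zero_mul, add_zero] at hobj
        exact lt_irrefl 0 hobj
  -- extract the dual solution
  rw [InCone_append] at hcone
  obtain ⟨v1, v2, heq, h1, h2⟩ := hcone
  rw [InCone_append] at h2
  obtain ⟨v3, v4, heq2, h3, h4⟩ := h2
  rw [InCone_append] at h4
  obtain ⟨v5, v6, heq3, h5, h6⟩ := h4
  rw [InCone_ofFn] at h1 h3 h5 h6
  obtain ⟨uq, huq, hv1⟩ := h1
  obtain ⟨al, hal, hv3⟩ := h3
  obtain ⟨be, hbe, hv5⟩ := h5
  obtain ⟨s, hs, hv6⟩ := h6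
  set uv : Fin n → ℝ := fun i => al i - be i with huv
  subst hv1 hv3 hv5 hv6 heq2 heq3
  -- component equations
  have hsnd : zstar = (∑ q : Fin m, uq q * b q) + ((∑ i : Fin n, al i)
      + ((∑ i : Fin n, be i * (-1)) + 0)) := by
    have := congrArg Prod.snd heq
    simpa [Prod.snd_sum, smul_eq_mul] using this
  have hfst : ∀ j : Fin E, ct j = (∑ q : Fin m, uq q * A q j) + uv (grp j) + s j := by
    intro j
    have h2 := congrFun (congrArg Prod.fst heq) j
    simp only [Prod.fst_sum, Prod.fst_add, Prod.smul_fst, smul_eq_mul, Finset.sum_apply,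
      Pi.add_apply, Pi.smul_apply] at h2
    have e1 : ∑ x : Fin n, al x * gi x j = al (grp j) := by
      rw [Finset.sum_congr rfl (fun x _ => show al x * gi x j
          = if grp j = x then al x else 0 by simp only [hgi]; split <;> simp)]
      rw [Finset.sum_ite_eq Finset.univ (grp j) al]
      simp
    have e2 : ∑ x : Fin n, be x * (-gi x) j = -be (grp j) := by
      rw [Finset.sum_congr rfl (fun x _ => show be x * (-gi x) j
          = if grp j = x then -be x else 0 by
        simp only [hgi, Pi.neg_apply]; split <;> simp)]
      rw [Finset.sum_ite_eq Finset.univ (grp j) (fun x => -be x)]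
      simp
    have e3 : ∑ x : Fin E, (s x * if j = x then (1:ℝ) else 0) = s j := by
      rw [Finset.sum_congr rfl (fun x _ => show s x * (if j = x then (1:ℝ) else 0)
          = if j = x then s x else 0 by split <;> simp)]
      rw [Finset.sum_ite_eq Finset.univ j s]
      simp
    rw [e1, e2, e3] at h2
    rw [h2, huv]
    ring
  have hsum_comm : ∀ j : Fin E, ∑ q : Fin m, A q j * uq q = ∑ q : Fin m, uq q * A q j :=
    fun j => Finset.sum_congr rfl fun q _ => mul_comm _ _
  have hctlec : ∀ j : Fin E, ct j ≤ c j := by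
    intro j
    simp only [hct]
    by_cases hj : j ∈ I
    · rw [if_pos hj]; exact sub_le_self _ (hRnn j hj)
    · rw [if_neg hj]; simp
  have hdus : dualObj b uq uv = zstar := by
    have hb : b ⬝ᵥ uq = ∑ q : Fin m, uq q * b q :=
      Finset.sum_congr rfl fun q _ => mul_comm _ _
    have hu : ∑ i : Fin n, uv i = (∑ i : Fin n, al i) - ∑ i : Fin n, be i := by
      simp only [huv]
      exact Finset.sum_sub_distrib _ _
    have hsnd' : zstar = (∑ q : Fin m, uq q * b q) + ((∑ i : Fin n, al i)
        - ∑ i : Fin n, be i) := by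
      rw [hsnd]
      simp only [mul_neg, mul_one, add_zero, Finset.sum_neg_distrib]
      ring
    simp only [dualObj]
    rw [hb, hu, hsnd']
  have hrc : ∀ j : Fin E, rc A c grp uq uv j = (if j ∈ I then R j else 0) + s j := by
    intro j
    have h := hfst j
    simp only [hct] at h
    simp only [rc]
    rw [hsum_comm j]
    linarith
  have hrcnn : ∀ j : Fin E, 0 ≤ rc A c grp uq uv j := by
    intro j
    rw [hrc j]
    have h1 : 0 ≤ (if j ∈ I then R j else 0) := by
      split
      · exact hRnn j (by assumption)
      · exact le_refl 0
    linarith [hs j]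
  refine ⟨uq, uv, ⟨fun q => huq q, ?_⟩, hdus, ?_⟩
  · intro j
    have h := hfst j
    have := hctlec j
    rw [hsum_comm j]
    linarith [hs j]
  · intro j hj
    obtain ⟨x, hx, hxj, hcx⟩ := (hR j hj).1
    have hid := cs_identity A b c grp uq uv x hx.2.1
    rw [hcx, hdus] at hid
    have h1 : rc A c grp uq uv j ≤ ∑ j' : Fin E, rc A c grp uq uv j' * x j' := by
      have := Finset.single_le_sum (f := fun j' => rc A c grp uq uv j' * x j')
        (fun j' _ => mul_nonneg (hrcnn j') (hx.2.2 j')) (Finset.mem_univ j)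
      simpa [hxj] using this
    have h2 : 0 ≤ ∑ q : Fin m, uq q * (A.mulVec x q - b q) :=
      Finset.sum_nonneg fun q _ => mul_nonneg (huq q) (sub_nonneg.2 (hx.1 q))
    have h4 : rc A c grp uq uv j = R j + s j := by rw [hrc j, if_pos hj]
    have h5 : 0 ≤ s j := hs j
    linarith
end

section
/- In the cyclic alldifferent instance (costs c_{ij} = 0 if i ≤ j, 1 otherwise, on {0,…,n}²), for every edge (k,l) ∈ L = {(i,i−1): 1 ≤ i ≤ n} ∪ {(0,n)}, the minimum cost of a perfect matching of {0,…,n} to {0,…,n} using edge (k,l) equals 1. -/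
open Finset

/-- Assignment cost of the cyclic alldifferent instance on {0,…,n}:
c_{ij} = 0 if i ≤ j, 1 otherwise. -/
noncomputable def acost (n : ℕ) (i j : Fin (n + 1)) : ℝ := if i ≤ j then 0 else 1

/-- The cycle L = {(i,i−1) : 1 ≤ i ≤ n} ∪ {(0,n)}, as the graph of the permutation
i ↦ i − 1 (mod n+1). -/
noncomputable def sigmaL (n : ℕ) : Equiv.Perm (Fin (n + 1)) := (finRotate (n + 1)).symm

lemma perm_eq_one_of_le (m : ℕ) (σ : Equiv.Perm (Fin m)) (h : ∀ i, i ≤ σ i) : σ = 1 := by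
  have hsum : (∑ i : Fin m, ((σ i : ℕ))) = ∑ i : Fin m, (i : ℕ) :=
    Equiv.sum_comp σ (fun i => (i : ℕ))
  have := (Finset.sum_eq_sum_iff_of_le (s := Finset.univ)
    (f := fun i : Fin m => (i : ℕ)) (g := fun i => ((σ i : ℕ)))
    (fun i _ => h i)).mp hsum.symm
  exact Equiv.ext fun i => (Fin.val_eq_val _ _).mp ((this i (Finset.mem_univ i)).symm)

/-- In the cyclic alldifferent instance, for every edge (k, l) ∈ L (i.e. l = σL k),
the minimum cost of a perfect matching (bijection) using the edge (k, l) equals 1. -/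
theorem stmt14 (n : ℕ) (hn : 0 < n) (k l : Fin (n + 1)) (hkl : l = sigmaL n k) :
    IsLeast {z | ∃ σ : Equiv.Perm (Fin (n + 1)), σ k = l ∧
      (∑ i : Fin (n + 1), acost n i (σ i)) = z} 1 := by
  have hne : l ≠ k := by
    intro h
    have : k = finRotate (n + 1) k := by
      rw [hkl] at h
      exact (Equiv.symm_apply_eq _).mp h
    rw [finRotate_succ_apply] at this
    have h0 : (0 : Fin (n+1)) = 1 := by
      have := congrArg (· - k) this
      simpa using this
    have := Fin.one_eq_zero_iff.mp h0.symm
    omega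
  constructor
  · -- membership: use swap k l
    refine ⟨Equiv.swap k l, Equiv.swap_apply_left k l, ?_⟩
    have hsum : (∑ i : Fin (n + 1), acost n i (Equiv.swap k l i)) =
        acost n k l + acost n l k := by
      rw [← Finset.add_sum_erase _ _ (Finset.mem_univ k),
          ← Finset.add_sum_erase _ _ (Finset.mem_erase.mpr ⟨hne, Finset.mem_univ l⟩)]
      rw [Equiv.swap_apply_left, Equiv.swap_apply_right]
      have : ∀ i ∈ ((Finset.univ.erase k).erase l),
          acost n i (Equiv.swap k l i) = 0 := by
        intro i hi
        simp only [Finset.mem_erase] at hi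
        rw [Equiv.swap_apply_of_ne_of_ne hi.2.1 hi.1]
        simp [acost]
      rw [Finset.sum_congr rfl this]
      simp [add_assoc]
    rw [hsum]
    unfold acost
    rcases lt_or_gt_of_ne hne with h | h
    · rw [if_neg (not_le.mpr h), if_pos h.le]; ring
    · rw [if_pos h.le, if_neg (not_le.mpr h)]; ring
  · -- lower bound
    rintro z ⟨σ, hσk, rfl⟩
    have hσ1 : σ ≠ 1 := by
      intro h; rw [h] at hσk; exact hne hσk.symm
    have : ∃ i, ¬ i ≤ σ i := by
      by_contra hc
      push_neg at hc
      exact hσ1 (perm_eq_one_of_le _ σ hc)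
    obtain ⟨i, hi⟩ := this
    have h1 : acost n i (σ i) = 1 := by simp [acost, hi]
    calc (1 : ℝ) = acost n i (σ i) := h1.symm
      _ ≤ ∑ j : Fin (n + 1), acost n j (σ j) :=
        Finset.single_le_sum (f := fun j => acost n j (σ j)) (fun j _ => by unfold acost; positivity) (Finset.mem_univ i)
end

section
/- Optimal value of the merged-objective dual (D_I): let I be a set of pairwise incompatible indices each belonging to a feasible integral solution, in an ideal LP formulation with partition constraints. The optimum of max over dual feasible u of [dual objective w(u) + (1/|I|)·Σ_{kl∈I} r_{kl}(u)] equals z* + (1/|I|)·Σ_{kl∈I} R_{kl}. -/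
open Finset



open Matrix

private lemma sum_dite_zero {ι : Type} [Fintype ι] (p : ι → Prop) [DecidablePred p]
    (f : {i // p i} → ℝ) :
    (∑ i : ι, if h : p i then f ⟨i, h⟩ else 0) = ∑ i : {i // p i}, f i := by
  classical
  calc (∑ i : ι, if h : p i then f ⟨i, h⟩ else 0)
      = ∑ i ∈ Finset.univ.filter p, (if h : p i then f ⟨i, h⟩ else 0) := by
        rw [Finset.sum_filter_of_ne]
        intro i _ hne
        by_contra hp
        exact hne (by simp [hp])
    _ = ∑ i : {i // p i}, (if h : p i.1 then f ⟨i.1, h⟩ else 0) :=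
        Finset.sum_subtype _ (by simp) _
    _ = ∑ i : {i // p i}, f i := by
        apply Finset.sum_congr rfl
        intro i _
        rw [dif_pos i.2]

private theorem fm_core : ∀ (q : ℕ) (ι : Type) [Fintype ι] (a : ι → Fin q → ℝ) (d : ι → ℝ),
    (∀ x : Fin q → ℝ, ∃ i, ∑ j, a i j * x j < d i) →
    ∃ y : ι → ℝ, (∀ i, 0 ≤ y i) ∧ (∀ j, ∑ i, y i * a i j = 0) ∧ 0 < ∑ i, y i * d i := by
  intro q
  induction q with
  | zero =>
    intro ι _ a d h
    classical
    obtain ⟨i0, hi0⟩ := h 0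
    simp only [Finset.univ_eq_empty, Finset.sum_empty] at hi0
    refine ⟨fun i => if i = i0 then 1 else 0, ?_, ?_, ?_⟩
    · intro i; by_cases hc : i = i0 <;> simp [hc]
    · intro j; exact absurd j.2 (by simp)
    · have h1 : ∑ i, (if i = i0 then (1:ℝ) else 0) * d i = d i0 := by
        simp [ite_mul]
      rw [h1]
      simpa using hi0
  | succ q IH =>
    intro ι _ a d h
    classical
    set α : ι → ℝ := fun i => a i (Fin.last q) with hα
    set dotc : ι → (Fin q → ℝ) → ℝ := fun i x' => ∑ j : Fin q, a i j.castSucc * x' j with hdotc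
    -- new system
    let ι' : Type := {i : ι // α i = 0} ⊕ ({i : ι // 0 < α i} × {i : ι // α i < 0})
    let a' : ι' → Fin q → ℝ := fun r => match r with
      | .inl z => fun j => a z.1 j.castSucc
      | .inr (i, k) => fun j => α i.1 * a k.1 j.castSucc + (-(α k.1)) * a i.1 j.castSucc
    let d' : ι' → ℝ := fun r => match r with
      | .inl z => d z.1
      | .inr (i, k) => α i.1 * d k.1 + (-(α k.1)) * d i.1
    have hinf : ∀ x' : Fin q → ℝ, ∃ r : ι', ∑ j, a' r j * x' j < d' r := by
      intro x'
      by_contra hc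
      push_neg at hc
      have hZ : ∀ (i : ι), α i = 0 → d i ≤ dotc i x' := by
        intro i hi
        have := hc (.inl ⟨i, hi⟩)
        simpa [a', d', dotc] using this
      have hPN : ∀ (i : ι), 0 < α i → ∀ (k : ι), α k < 0 →
          α i * d k + (-(α k)) * d i ≤ α i * dotc k x' + (-(α k)) * dotc i x' := by
        intro i hi k hk
        have h0 := hc (.inr (⟨i, hi⟩, ⟨k, hk⟩))
        have hsum : ∑ j, a' (.inr (⟨i, hi⟩, ⟨k, hk⟩)) j * x' j
            = α i * dotc k x' + (-(α k)) * dotc i x' := by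
          simp [a', dotc, add_mul, Finset.sum_add_distrib, Finset.mul_sum, mul_assoc]
        rw [hsum] at h0
        simpa [d'] using h0
      set P : Finset ι := Finset.univ.filter (fun i => 0 < α i) with hP
      set N : Finset ι := Finset.univ.filter (fun i => α i < 0) with hN
      set t : ℝ := if hp : P.Nonempty then P.sup' hp (fun i => (d i - dotc i x') / α i)
        else if hn : N.Nonempty then N.inf' hn (fun k => (d k - dotc k x') / α k) else 0 with ht
      have hlow : ∀ i ∈ P, (d i - dotc i x') / α i ≤ t := by
        intro i hi
        have hp : P.Nonempty := ⟨i, hi⟩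
        rw [ht, dif_pos hp]
        exact Finset.le_sup' (fun i => (d i - dotc i x') / α i) hi
      have hupp : ∀ k ∈ N, t ≤ (d k - dotc k x') / α k := by
        intro k hk
        have hkneg : α k < 0 := by simpa [hN] using hk
        by_cases hp : P.Nonempty
        · rw [ht, dif_pos hp]
          apply Finset.sup'_le
          intro i hi
          have hipos : 0 < α i := by simpa [hP] using hi
          have key := hPN i hipos k hkneg
          rw [show (d k - dotc k x') / α k = (-(d k - dotc k x')) / (-(α k)) by
            rw [neg_div_neg_eq]]
          rw [div_le_div_iff₀ hipos (by linarith)]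
          nlinarith [key]
        · have hn : N.Nonempty := ⟨k, hk⟩
          rw [ht, dif_neg hp, dif_pos hn]
          exact Finset.inf'_le _ hk
      -- contradiction with h
      obtain ⟨i, hviol⟩ := h (Fin.snoc x' t)
      have hsum : ∑ j, a i j * (Fin.snoc x' t : Fin (q+1) → ℝ) j = dotc i x' + α i * t := by
        rw [Fin.sum_univ_castSucc]
        simp [dotc, α, Fin.snoc_castSucc, Fin.snoc_last]
      rw [hsum] at hviol
      rcases lt_trichotomy (α i) 0 with hneg | hzero | hpos
      · have hk : i ∈ N := by simp [hN, hneg]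
        have h0 := hupp i hk
        have h2 : α i * ((d i - dotc i x') / α i) ≤ α i * t :=
          mul_le_mul_of_nonpos_left h0 (le_of_lt hneg)
        rw [mul_div_cancel₀ _ (ne_of_lt hneg)] at h2
        linarith
      · have := hZ i hzero
        rw [hzero] at hviol
        linarith
      · have hk : i ∈ P := by simp [hP, hpos]
        have h0 := hlow i hk
        have h2 : (d i - dotc i x') / α i * α i ≤ t * α i :=
          mul_le_mul_of_nonneg_right h0 (le_of_lt hpos)
        rw [div_mul_cancel₀ _ (ne_of_gt hpos)] at h2
        nlinarith
    obtain ⟨y', hy'0, hy'col, hy'pos⟩ := IH ι' a' d' hinf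
    -- lift the certificate
    set y1 : ι → ℝ := fun i => if h : α i = 0 then y' (.inl ⟨i, h⟩) else 0 with hy1
    set y2 : ι → ℝ := fun i => if h : 0 < α i then
        ∑ k : {k : ι // α k < 0}, (-(α k.1)) * y' (.inr (⟨i, h⟩, k)) else 0 with hy2
    set y3 : ι → ℝ := fun i => if h : α i < 0 then
        ∑ z : {z : ι // 0 < α z}, α z.1 * y' (.inr (z, ⟨i, h⟩)) else 0 with hy3
    set y : ι → ℝ := fun i => y1 i + y2 i + y3 i with hy
    have key : ∀ g : ι → ℝ, ∑ i, y i * g i =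
        (∑ z : {i : ι // α i = 0}, y' (.inl z) * g z.1) +
        ∑ p : {i : ι // 0 < α i} × {k : ι // α k < 0},
          y' (.inr p) * (α p.1.1 * g p.2.1 + (-(α p.2.1)) * g p.1.1) := by
      intro g
      have hsplit : ∑ i, y i * g i = ∑ i, y1 i * g i + (∑ i, y2 i * g i + ∑ i, y3 i * g i) := by
        rw [← Finset.sum_add_distrib, ← Finset.sum_add_distrib]
        apply Finset.sum_congr rfl
        intro i _
        simp only [hy]; ring
      rw [hsplit]
      have h1 : ∑ i, y1 i * g i = ∑ z : {i : ι // α i = 0}, y' (.inl z) * g z.1 := by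
        rw [← sum_dite_zero (fun i => α i = 0) (fun z => y' (.inl z) * g z.1)]
        apply Finset.sum_congr rfl
        intro i _
        by_cases hcase : α i = 0
        · simp only [hy1]; rw [dif_pos hcase, dif_pos hcase]
        · simp only [hy1]; rw [dif_neg hcase, dif_neg hcase, zero_mul]
      have h2 : ∑ i, y2 i * g i = ∑ p : {i : ι // 0 < α i} × {k : ι // α k < 0},
          (-(α p.2.1)) * y' (.inr p) * g p.1.1 := by
        rw [Fintype.sum_prod_type,
          ← sum_dite_zero (fun i => 0 < α i)
            (fun z => ∑ k : {k : ι // α k < 0}, (-(α k.1)) * y' (.inr (z, k)) * g z.1)]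
        apply Finset.sum_congr rfl
        intro i _
        by_cases hcase : 0 < α i
        · simp only [hy2]; rw [dif_pos hcase, dif_pos hcase, Finset.sum_mul]
        · simp only [hy2]; rw [dif_neg hcase, dif_neg hcase, zero_mul]
      have h3 : ∑ i, y3 i * g i = ∑ p : {i : ι // 0 < α i} × {k : ι // α k < 0},
          α p.1.1 * y' (.inr p) * g p.2.1 := by
        rw [Fintype.sum_prod_type_right,
          ← sum_dite_zero (fun k => α k < 0)
            (fun z => ∑ i : {i : ι // 0 < α i}, α i.1 * y' (.inr (i, z)) * g z.1)]
        apply Finset.sum_congr rfl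
        intro k _
        by_cases hcase : α k < 0
        · simp only [hy3]; rw [dif_pos hcase, dif_pos hcase, Finset.sum_mul]
        · simp only [hy3]; rw [dif_neg hcase, dif_neg hcase, zero_mul]
      rw [h1, h2, h3, ← Finset.sum_add_distrib]
      congr 1
      apply Finset.sum_congr rfl
      intro p _
      ring
    refine ⟨y, ?_, ?_, ?_⟩
    · intro i
      have h1 : 0 ≤ y1 i := by
        simp only [hy1]
        by_cases hcase : α i = 0
        · rw [dif_pos hcase]; exact hy'0 _
        · rw [dif_neg hcase]
      have h2 : 0 ≤ y2 i := by
        simp only [hy2]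
        by_cases hcase : 0 < α i
        · rw [dif_pos hcase]
          apply Finset.sum_nonneg
          intro k _
          exact mul_nonneg (by linarith [k.2]) (hy'0 _)
        · rw [dif_neg hcase]
      have h3 : 0 ≤ y3 i := by
        simp only [hy3]
        by_cases hcase : α i < 0
        · rw [dif_pos hcase]
          apply Finset.sum_nonneg
          intro z _
          exact mul_nonneg (le_of_lt z.2) (hy'0 _)
        · rw [dif_neg hcase]
      have : y i = y1 i + y2 i + y3 i := rfl
      rw [this]
      linarith
    · intro j
      refine Fin.lastCases ?_ ?_ j
      · -- last column
        rw [key (fun i => a i (Fin.last q))]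
        have hA : ∀ z : {i : ι // α i = 0}, y' (.inl z) * a z.1 (Fin.last q) = 0 := by
          intro z
          have hz : a z.1 (Fin.last q) = 0 := z.2
          rw [hz, mul_zero]
        have hB : ∀ p : {i : ι // 0 < α i} × {k : ι // α k < 0},
            y' (.inr p) * (α p.1.1 * a p.2.1 (Fin.last q) + (-(α p.2.1)) * a p.1.1 (Fin.last q)) = 0 := by
          intro p
          have hp : α p.1.1 * a p.2.1 (Fin.last q) + (-(α p.2.1)) * a p.1.1 (Fin.last q) = 0 := by
            simp only [hα]; ring
          rw [hp, mul_zero]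
        rw [Finset.sum_congr rfl (fun z _ => hA z), Finset.sum_congr rfl (fun p _ => hB p)]
        simp
      · intro j'
        rw [key (fun i => a i j'.castSucc)]
        have hcol := hy'col j'
        rw [Fintype.sum_sum_type] at hcol
        rw [show (∑ z : {i : ι // α i = 0}, y' (.inl z) * a z.1 j'.castSucc) =
            ∑ z : {i : ι // α i = 0}, y' (.inl z) * a' (.inl z) j' from rfl]
        rw [show (∑ p : {i : ι // 0 < α i} × {k : ι // α k < 0},
            y' (.inr p) * (α p.1.1 * a p.2.1 j'.castSucc + (-(α p.2.1)) * a p.1.1 j'.castSucc)) =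
            ∑ p : {i : ι // 0 < α i} × {k : ι // α k < 0},
            y' (.inr p) * a' (.inr p) j' from Finset.sum_congr rfl (fun p _ => by
              rcases p with ⟨pi, pk⟩; rfl)]
        exact hcol
    · rw [key d]
      rw [Fintype.sum_sum_type] at hy'pos
      rw [show (∑ z : {i : ι // α i = 0}, y' (.inl z) * d z.1) =
          ∑ z : {i : ι // α i = 0}, y' (.inl z) * d' (.inl z) from rfl]
      rw [show (∑ p : {i : ι // 0 < α i} × {k : ι // α k < 0},
          y' (.inr p) * (α p.1.1 * d p.2.1 + (-(α p.2.1)) * d p.1.1)) =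
          ∑ p : {i : ι // 0 < α i} × {k : ι // α k < 0},
          y' (.inr p) * d' (.inr p) from Finset.sum_congr rfl (fun p _ => by
            rcases p with ⟨pi, pk⟩; rfl)]
      exact hy'pos


private theorem fm_gen (ι κ : Type) [Fintype ι] [Fintype κ] (a : ι → κ → ℝ) (d : ι → ℝ)
    (h : ∀ x : κ → ℝ, ∃ i, ∑ j, a i j * x j < d i) :
    ∃ y : ι → ℝ, (∀ i, 0 ≤ y i) ∧ (∀ j, ∑ i, y i * a i j = 0) ∧ 0 < ∑ i, y i * d i := by
  classical
  obtain ⟨e⟩ : Nonempty (κ ≃ Fin (Fintype.card κ)) := ⟨Fintype.equivFin κ⟩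
  have h' : ∀ x : Fin (Fintype.card κ) → ℝ, ∃ i, ∑ j', a i (e.symm j') * x j' < d i := by
    intro x
    obtain ⟨i, hi⟩ := h (fun j => x (e j))
    refine ⟨i, ?_⟩
    calc ∑ j', a i (e.symm j') * x j'
        = ∑ j, a i j * x (e j) :=
          (Fintype.sum_equiv e (fun j => a i j * x (e j))
            (fun j' => a i (e.symm j') * x j')
            (fun j => by simp)).symm
      _ < d i := hi
  obtain ⟨y, hy0, hycol, hypos⟩ := fm_core (Fintype.card κ) ι (fun i j' => a i (e.symm j')) d h'
  refine ⟨y, hy0, ?_, hypos⟩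
  intro j
  have := hycol (e j)
  simpa using this

/-- Gale's theorem / Farkas for `x ≥ 0, Mx ≥ d`. -/
private theorem gale (ι κ : Type) [Fintype ι] [Fintype κ] (M : ι → κ → ℝ) (d : ι → ℝ)
    (h : ∀ x : κ → ℝ, (∀ j, 0 ≤ x j) → ∃ i, ∑ j, M i j * x j < d i) :
    ∃ y : ι → ℝ, (∀ i, 0 ≤ y i) ∧ (∀ j, ∑ i, y i * M i j ≤ 0) ∧ 0 < ∑ i, y i * d i := by
  classical
  set a : ι ⊕ κ → κ → ℝ := fun r => match r with
    | .inl i => M i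
    | .inr j0 => fun j => if j = j0 then 1 else 0 with ha
  set dd : ι ⊕ κ → ℝ := fun r => match r with
    | .inl i => d i
    | .inr _ => 0 with hdd
  have hinf : ∀ x : κ → ℝ, ∃ r : ι ⊕ κ, ∑ j, a r j * x j < dd r := by
    intro x
    by_cases hx : ∀ j, 0 ≤ x j
    · obtain ⟨i, hi⟩ := h x hx
      exact ⟨.inl i, hi⟩
    · push_neg at hx
      obtain ⟨j0, hj0⟩ := hx
      refine ⟨.inr j0, ?_⟩
      have : ∑ j, a (.inr j0) j * x j = x j0 := by
        simp [ha, ite_mul]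
      rw [this]
      exact hj0
  obtain ⟨y, hy0, hycol, hypos⟩ := fm_gen (ι ⊕ κ) κ a dd hinf
  refine ⟨fun i => y (.inl i), fun i => hy0 _, ?_, ?_⟩
  · intro j
    have := hycol j
    rw [Fintype.sum_sum_type] at this
    have h2 : ∑ j0 : κ, y (.inr j0) * a (.inr j0) j = y (.inr j) := by
      have : ∀ j0 : κ, y (.inr j0) * a (.inr j0) j = if j0 = j then y (.inr j0) else 0 := by
        intro j0
        by_cases hc : j = j0
        · subst hc; simp [ha]
        · simp [ha, hc, Ne.symm hc]
      rw [Finset.sum_congr rfl (fun j0 _ => this j0)]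
      simp
    rw [h2] at this
    have := hy0 (Sum.inr j)
    linarith
  · rw [Fintype.sum_sum_type] at hypos
    have h2 : ∑ j0 : κ, y (.inr j0) * dd (.inr j0) = 0 := by simp [hdd]
    rw [h2] at hypos
    simpa using hypos

/-- Strong LP duality for `min c·x  s.t.  Mx ≥ d, x ≥ 0`, given an optimal primal solution. -/
private theorem strongDual (ι κ : Type) [Fintype ι] [Fintype κ] (M : ι → κ → ℝ)
    (d : ι → ℝ) (c : κ → ℝ) (z : ℝ) (xs : κ → ℝ) (hxs0 : ∀ j, 0 ≤ xs j)
    (hxsf : ∀ i, d i ≤ ∑ j, M i j * xs j) (hxsz : ∑ j, c j * xs j = z)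
    (hlb : ∀ x : κ → ℝ, (∀ j, 0 ≤ x j) → (∀ i, d i ≤ ∑ j, M i j * x j) →
      z ≤ ∑ j, c j * x j) :
    ∃ y : ι → ℝ, (∀ i, 0 ≤ y i) ∧ (∀ j, ∑ i, y i * M i j ≤ c j) ∧ ∑ i, d i * y i = z := by
  classical
  -- dual system: variables y : ι, rows κ ⊕ Unit
  set N : κ ⊕ Unit → ι → ℝ := fun r => match r with
    | .inl j => fun i => -(M i j)
    | .inr _ => fun i => d i with hN
  set e : κ ⊕ Unit → ℝ := fun r => match r with
    | .inl j => -(c j)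
    | .inr _ => z with he
  by_cases hfeas : ∃ y : ι → ℝ, (∀ i, 0 ≤ y i) ∧ ∀ r, e r ≤ ∑ i, N r i * y i
  · obtain ⟨y, hy0, hyr⟩ := hfeas
    have hcol : ∀ j, ∑ i, y i * M i j ≤ c j := by
      intro j
      have := hyr (.inl j)
      simp only [hN, he] at this
      have h2 : ∑ i, -(M i j) * y i = -∑ i, y i * M i j := by
        rw [← Finset.sum_neg_distrib]
        apply Finset.sum_congr rfl; intro i _; ring
      rw [h2] at this
      linarith
    have hge : z ≤ ∑ i, d i * y i := by
      have := hyr (.inr ())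
      simpa [hN, he, mul_comm] using this
    -- weak duality: d·y ≤ c·xs = z
    have hle : ∑ i, d i * y i ≤ z := by
      have step1 : ∑ i, d i * y i ≤ ∑ i, (∑ j, M i j * xs j) * y i := by
        apply Finset.sum_le_sum
        intro i _
        exact mul_le_mul_of_nonneg_right (hxsf i) (hy0 i)
      have step2 : ∑ i, (∑ j, M i j * xs j) * y i = ∑ j, (∑ i, y i * M i j) * xs j := by
        simp only [Finset.sum_mul]
        rw [Finset.sum_comm]
        apply Finset.sum_congr rfl
        intro j _
        apply Finset.sum_congr rfl
        intro i _
        ring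
      have step3 : ∑ j, (∑ i, y i * M i j) * xs j ≤ ∑ j, c j * xs j := by
        apply Finset.sum_le_sum
        intro j _
        exact mul_le_mul_of_nonneg_right (hcol j) (hxs0 j)
      calc ∑ i, d i * y i ≤ ∑ i, (∑ j, M i j * xs j) * y i := step1
        _ = ∑ j, (∑ i, y i * M i j) * xs j := step2
        _ ≤ ∑ j, c j * xs j := step3
        _ = z := hxsz
    exact ⟨y, hy0, hcol, le_antisymm hle hge⟩
  · exfalso
    push_neg at hfeas
    obtain ⟨w, hw0, hwcol, hwpos⟩ := gale (κ ⊕ Unit) ι N e hfeas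
    set x : κ → ℝ := fun j => w (.inl j) with hx
    set μ : ℝ := w (.inr ()) with hμ
    have hcol : ∀ i, μ * d i ≤ ∑ j, x j * M i j := by
      intro i
      have := hwcol i
      rw [Fintype.sum_sum_type] at this
      have h1 : ∑ j : κ, w (.inl j) * N (.inl j) i = -∑ j, x j * M i j := by
        rw [← Finset.sum_neg_distrib]
        apply Finset.sum_congr rfl
        intro j _
        simp [hN, hx]
      have h2 : ∑ u : Unit, w (.inr u) * N (.inr u) i = μ * d i := by
        simp [hN, hμ]
      rw [h1, h2] at this
      linarith
    have hpos : ∑ j, c j * x j < μ * z := by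
      have := hwpos
      rw [Fintype.sum_sum_type] at this
      have h1 : ∑ j : κ, w (.inl j) * e (.inl j) = -∑ j, c j * x j := by
        rw [← Finset.sum_neg_distrib]
        apply Finset.sum_congr rfl
        intro j _
        simp [he, hx]
        ring
      have h2 : ∑ u : Unit, w (.inr u) * e (.inr u) = μ * z := by
        simp [he, hμ]
      rw [h1, h2] at this
      linarith
    have hμ0 : 0 ≤ μ := hw0 _
    rcases eq_or_lt_of_le hμ0 with hzero | hposμ
    · -- μ = 0 : unbounded direction
      have hcol0 : ∀ i, 0 ≤ ∑ j, x j * M i j := by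
        intro i
        have := hcol i
        rw [← hzero] at this
        linarith
      have hneg : ∑ j, c j * x j < 0 := by
        have := hpos
        rw [← hzero] at this
        linarith
      have hfeas2 : ∀ i, d i ≤ ∑ j, M i j * (xs j + x j) := by
        intro i
        have hsplit : ∑ j, M i j * (xs j + x j) = (∑ j, M i j * xs j) + ∑ j, x j * M i j := by
          rw [← Finset.sum_add_distrib]
          apply Finset.sum_congr rfl
          intro j _
          ring
        rw [hsplit]
        have := hxsf i
        have := hcol0 i
        linarith
      have hnn : ∀ j, 0 ≤ xs j + x j := fun j => add_nonneg (hxs0 j) (hw0 _)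
      have := hlb _ hnn hfeas2
      have hsplit : ∑ j, c j * (xs j + x j) = (∑ j, c j * xs j) + ∑ j, c j * x j := by
        rw [← Finset.sum_add_distrib]
        apply Finset.sum_congr rfl
        intro j _
        ring
      rw [hsplit, hxsz] at this
      linarith
    · -- μ > 0 : better primal solution
      have hnn : ∀ j, 0 ≤ x j / μ := fun j => div_nonneg (hw0 _) hμ0
      have hfeas2 : ∀ i, d i ≤ ∑ j, M i j * (x j / μ) := by
        intro i
        have hsplit : ∑ j, M i j * (x j / μ) = (∑ j, x j * M i j) / μ := by
          rw [Finset.sum_div]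
          apply Finset.sum_congr rfl
          intro j _
          ring
        rw [hsplit]
        rw [le_div_iff₀ hposμ]
        have := hcol i
        linarith [hcol i]
      have := hlb _ hnn hfeas2
      have hsplit : ∑ j, c j * (x j / μ) = (∑ j, c j * x j) / μ := by
        rw [Finset.sum_div]
        apply Finset.sum_congr rfl
        intro j _
        ring
      rw [hsplit] at this
      rw [le_div_iff₀ hposμ] at this
      nlinarith


open Matrix

private lemma uv_sum_eq {m n E : ℕ} (A : Matrix (Fin m) (Fin E) ℝ) (b : Fin m → ℝ)
    (grp : Fin E → Fin n) (uv : Fin n → ℝ) (x : Fin E → ℝ) (hx : Feas A b grp x) :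
    ∑ i : Fin n, uv i = ∑ j : Fin E, uv (grp j) * x j := by
  classical
  calc ∑ i : Fin n, uv i = ∑ i : Fin n, uv i * (∑ j : Fin E, if grp j = i then x j else 0) := by
        apply Finset.sum_congr rfl
        intro i _
        rw [hx.2.1 i, mul_one]
    _ = ∑ i : Fin n, ∑ j : Fin E, (if grp j = i then uv i * x j else 0) := by
        apply Finset.sum_congr rfl
        intro i _
        rw [Finset.mul_sum]
        apply Finset.sum_congr rfl
        intro j _
        by_cases h : grp j = i <;> simp [h]
    _ = ∑ j : Fin E, ∑ i : Fin n, (if grp j = i then uv i * x j else 0) := Finset.sum_comm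
    _ = ∑ j : Fin E, uv (grp j) * x j := by
        apply Finset.sum_congr rfl
        intro j _
        rw [Finset.sum_ite_eq]
        simp

private lemma b_dot_le {m n E : ℕ} (A : Matrix (Fin m) (Fin E) ℝ) (b : Fin m → ℝ)
    (grp : Fin E → Fin n) (uq : Fin m → ℝ) (huq : 0 ≤ uq) (x : Fin E → ℝ)
    (hx : Feas A b grp x) :
    b ⬝ᵥ uq ≤ ∑ j : Fin E, (∑ q : Fin m, A q j * uq q) * x j := by
  calc b ⬝ᵥ uq = ∑ q, b q * uq q := rfl
    _ ≤ ∑ q, (A.mulVec x q) * uq q := by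
        apply Finset.sum_le_sum
        intro q _
        exact mul_le_mul_of_nonneg_right (hx.1 q) (huq q)
    _ = ∑ q, ∑ j, A q j * x j * uq q := by
        apply Finset.sum_congr rfl
        intro q _
        rw [Matrix.mulVec, dotProduct, Finset.sum_mul]
    _ = ∑ j, ∑ q, A q j * x j * uq q := Finset.sum_comm
    _ = ∑ j : Fin E, (∑ q : Fin m, A q j * uq q) * x j := by
        apply Finset.sum_congr rfl
        intro j _
        rw [Finset.sum_mul]
        apply Finset.sum_congr rfl
        intro q _
        ring

/-- Weak duality with reduced cost: if `x` is feasible with `x kl = 1`, then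
`w(u) + r_kl(u) ≤ c ⬝ᵥ x` for any dual feasible `u`. -/
private lemma weak_dual {m n E : ℕ} (A : Matrix (Fin m) (Fin E) ℝ) (b : Fin m → ℝ)
    (c : Fin E → ℝ) (grp : Fin E → Fin n) (uq : Fin m → ℝ) (uv : Fin n → ℝ)
    (hdf : DualFeas A c grp uq uv) (x : Fin E → ℝ) (hx : Feas A b grp x)
    (kl : Fin E) (hkl : x kl = 1) :
    dualObj b uq uv + rc A c grp uq uv kl ≤ c ⬝ᵥ x := by
  have hrc0 : ∀ j, 0 ≤ rc A c grp uq uv j := by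
    intro j
    have := hdf.2 j
    unfold rc
    linarith
  have hsplit : c ⬝ᵥ x = (∑ j, rc A c grp uq uv j * x j) +
      ((∑ j, uv (grp j) * x j) + ∑ j, (∑ q, A q j * uq q) * x j) := by
    rw [← Finset.sum_add_distrib, ← Finset.sum_add_distrib]
    apply Finset.sum_congr rfl
    intro j _
    unfold rc
    ring
  have hrckl : rc A c grp uq uv kl ≤ ∑ j, rc A c grp uq uv j * x j := by
    have h1 : rc A c grp uq uv kl * x kl ≤ ∑ j, rc A c grp uq uv j * x j := by
      apply Finset.single_le_sum (f := fun j => rc A c grp uq uv j * x j)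
      · intro j _
        exact mul_nonneg (hrc0 j) (hx.2.2 j)
      · exact Finset.mem_univ kl
    rw [hkl, mul_one] at h1
    exact h1
  have e1 := uv_sum_eq A b grp uv x hx
  have e2 := b_dot_le A b grp uq hdf.1 x hx
  unfold dualObj
  rw [hsplit, ← e1]
  linarith


/-- Optimal value of the merged-objective dual (D_I): for a nonempty set I of pairwise
incompatible indices, each belonging to a feasible integral solution, the maximum over
dual feasible u of w(u) + (1/|I|)·Σ_{kl∈I} r_{kl}(u) equals
z* + (1/|I|)·Σ_{kl∈I} R_{kl}. -/
theorem stmt15 {m n E : ℕ} (A : Matrix (Fin m) (Fin E) ℝ) (b : Fin m → ℝ)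
    (c : Fin E → ℝ) (grp : Fin E → Fin n) (zstar : ℝ)
    (hz : IsLeast {z | ∃ x : Fin E → ℝ, Feas A b grp x ∧ c ⬝ᵥ x = z} zstar)
    (hideal : ∀ c' : Fin E → ℝ, (∃ x0 : Fin E → ℝ, Feas A b grp x0) →
      ∃ xt : Fin E → ℝ, Feas A b grp xt ∧ Integral xt ∧
        ∀ y : Fin E → ℝ, Feas A b grp y → c' ⬝ᵥ xt ≤ c' ⬝ᵥ y)
    (I : Finset (Fin E)) (hI : I.Nonempty)
    (hinc : ∀ x : Fin E → ℝ, Feas A b grp x → Integral x →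
      ∀ j ∈ I, ∀ j' ∈ I, x j = 1 → x j' = 1 → j = j')
    (hmem : ∀ j ∈ I, ∃ x : Fin E → ℝ, Feas A b grp x ∧ Integral x ∧ x j = 1)
    (R : Fin E → ℝ)
    (hR : ∀ j ∈ I,
      IsLeast {z | ∃ x : Fin E → ℝ, Feas A b grp x ∧ x j = 1 ∧ c ⬝ᵥ x = z}
        (zstar + R j)) :
    IsGreatest
      {w | ∃ (uq : Fin m → ℝ) (uv : Fin n → ℝ), DualFeas A c grp uq uv ∧
        w = dualObj b uq uv + (1 / (I.card : ℝ)) * ∑ kl ∈ I, rc A c grp uq uv kl}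
      (zstar + (1 / (I.card : ℝ)) * ∑ kl ∈ I, R kl) := by
  classical
  have hcardpos : (0:ℝ) < (I.card : ℝ) := by
    exact_mod_cast Finset.card_pos.mpr hI
  have hc0 : (I.card : ℝ) ≠ 0 := ne_of_gt hcardpos
  -- Part 1: upper bound (weak duality for the merged dual)
  have hub : ∀ (uq : Fin m → ℝ) (uv : Fin n → ℝ), DualFeas A c grp uq uv →
      dualObj b uq uv + (1/(I.card:ℝ)) * ∑ kl ∈ I, rc A c grp uq uv kl ≤
      zstar + (1/(I.card:ℝ)) * ∑ kl ∈ I, R kl := by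
    intro uq uv hdf
    have hterm : ∀ kl ∈ I, dualObj b uq uv + rc A c grp uq uv kl ≤ zstar + R kl := by
      intro kl hkl
      obtain ⟨x, hxf, hx1, hxz⟩ := (hR kl hkl).1
      have h := weak_dual A b c grp uq uv hdf x hxf kl hx1
      rw [hxz] at h
      exact h
    have hsum := Finset.sum_le_sum hterm
    rw [Finset.sum_add_distrib, Finset.sum_add_distrib, Finset.sum_const, Finset.sum_const,
      nsmul_eq_mul, nsmul_eq_mul] at hsum
    have e1 : dualObj b uq uv + 1/(I.card:ℝ) * ∑ kl ∈ I, rc A c grp uq uv kl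
        = ((I.card:ℝ) * dualObj b uq uv + ∑ kl ∈ I, rc A c grp uq uv kl) / (I.card:ℝ) := by
      field_simp
    have e2 : zstar + 1/(I.card:ℝ) * ∑ kl ∈ I, R kl
        = ((I.card:ℝ) * zstar + ∑ kl ∈ I, R kl) / (I.card:ℝ) := by
      field_simp
    rw [e1, e2]
    gcongr

  -- choice of restricted optima
  have hchoice : ∀ kl, kl ∈ I → ∃ x : Fin E → ℝ,
      Feas A b grp x ∧ x kl = 1 ∧ c ⬝ᵥ x = zstar + R kl := fun kl h => (hR kl h).1
  set F : Fin E → Fin E → ℝ :=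
    fun kl => if h : kl ∈ I then Classical.choose (hchoice kl h) else 0 with hF
  have hFspec : ∀ kl ∈ I, Feas A b grp (F kl) ∧ F kl kl = 1 ∧ c ⬝ᵥ F kl = zstar + R kl := by
    intro kl h
    simp only [hF, dif_pos h]
    exact Classical.choose_spec (hchoice kl h)
  set xstar : Fin E → ℝ := fun j => 1/(I.card:ℝ) * ∑ kl ∈ I, F kl j with hxstar
  have hlin : ∀ g : Fin E → ℝ, ∑ j, g j * xstar j
      = 1/(I.card:ℝ) * ∑ kl ∈ I, ∑ j, g j * F kl j := by
    intro g
    calc ∑ j, g j * xstar j = ∑ j, ∑ kl ∈ I, 1/(I.card:ℝ) * (g j * F kl j) := by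
          apply Finset.sum_congr rfl
          intro j _
          show g j * (1/(I.card:ℝ) * ∑ kl ∈ I, F kl j) = _
          rw [Finset.mul_sum, Finset.mul_sum]
          apply Finset.sum_congr rfl
          intro kl _
          ring
      _ = ∑ kl ∈ I, ∑ j, 1/(I.card:ℝ) * (g j * F kl j) := Finset.sum_comm
      _ = 1/(I.card:ℝ) * ∑ kl ∈ I, ∑ j, g j * F kl j := by
          rw [Finset.mul_sum]
          apply Finset.sum_congr rfl
          intro kl _
          rw [Finset.mul_sum]
  have hind : ∀ (i : Fin n) (x : Fin E → ℝ),
      (∑ j, if grp j = i then x j else 0) = ∑ j, (if grp j = i then (1:ℝ) else 0) * x j := by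
    intro i x
    apply Finset.sum_congr rfl
    intro j _
    by_cases h : grp j = i <;> simp [h]
  have hxstarF : Feas A b grp xstar := by
    refine ⟨?_, ?_, ?_⟩
    · intro q
      have e : A.mulVec xstar q = ∑ j, A q j * xstar j := rfl
      rw [e, hlin (A q)]
      have hge : ∀ kl ∈ I, b q ≤ ∑ j, A q j * F kl j := by
        intro kl hkl
        exact (hFspec kl hkl).1.1 q
      have hs := Finset.sum_le_sum hge
      rw [Finset.sum_const, nsmul_eq_mul] at hs
      calc b q = 1/(I.card:ℝ) * ((I.card:ℝ) * b q) := by field_simp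
        _ ≤ 1/(I.card:ℝ) * ∑ kl ∈ I, ∑ j, A q j * F kl j :=
            mul_le_mul_of_nonneg_left hs (by positivity)
    · intro i
      rw [hind i xstar, hlin]
      have he : ∀ kl ∈ I, ∑ j, (if grp j = i then (1:ℝ) else 0) * F kl j = 1 := by
        intro kl hkl
        rw [← hind i (F kl)]
        exact (hFspec kl hkl).1.2.1 i
      rw [Finset.sum_congr rfl he, Finset.sum_const, nsmul_eq_mul, mul_one]
      field_simp
    · intro j
      apply mul_nonneg (by positivity)
      apply Finset.sum_nonneg
      intro kl hkl
      exact (hFspec kl hkl).1.2.2 j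
  have hxstarge : ∀ j ∈ I, 1/(I.card:ℝ) ≤ xstar j := by
    intro j hj
    have h1 : F j j ≤ ∑ kl ∈ I, F kl j := by
      apply Finset.single_le_sum (f := fun kl => F kl j)
      · intro kl hkl
        exact (hFspec kl hkl).1.2.2 j
      · exact hj
    have h2 : (1:ℝ) ≤ ∑ kl ∈ I, F kl j := by
      rw [← (hFspec j hj).2.1]
      exact h1
    calc 1/(I.card:ℝ) = 1/(I.card:ℝ) * 1 := by ring
      _ ≤ 1/(I.card:ℝ) * ∑ kl ∈ I, F kl j :=
          mul_le_mul_of_nonneg_left h2 (by positivity)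
  have hxstarval : c ⬝ᵥ xstar = zstar + 1/(I.card:ℝ) * ∑ kl ∈ I, R kl := by
    have e : c ⬝ᵥ xstar = ∑ j, c j * xstar j := rfl
    rw [e, hlin c]
    have he : ∀ kl ∈ I, ∑ j, c j * F kl j = zstar + R kl := by
      intro kl hkl
      exact (hFspec kl hkl).2.2
    rw [Finset.sum_congr rfl he, Finset.sum_add_distrib, Finset.sum_const, nsmul_eq_mul]
    field_simp
  -- R is nonnegative on I
  have hRnn : ∀ kl ∈ I, 0 ≤ R kl := by
    intro kl hkl
    obtain ⟨x, hxf, _, hxz⟩ := (hR kl hkl).1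
    have := hz.2 ⟨x, hxf, rfl⟩
    rw [hxz] at this
    linarith
  -- Lagrangian lower bound for the merged primal
  set c' : Fin E → ℝ := fun j => c j - (if j ∈ I then R j else 0) with hc'
  have hsplitc' : ∀ x : Fin E → ℝ, c' ⬝ᵥ x = c ⬝ᵥ x - ∑ kl ∈ I, R kl * x kl := by
    intro x
    have e : c' ⬝ᵥ x = ∑ j, (c j - (if j ∈ I then R j else 0)) * x j := rfl
    rw [e]
    have e2 : ∀ j, (c j - (if j ∈ I then R j else 0)) * x j
        = c j * x j - (if j ∈ I then R j * x j else 0) := by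
      intro j
      by_cases h : j ∈ I <;> simp [h] <;> ring
    rw [Finset.sum_congr rfl (fun j _ => e2 j), Finset.sum_sub_distrib]
    congr 1
    rw [Finset.sum_ite_mem, Finset.univ_inter]
  obtain ⟨x0, hx0f, _⟩ := hz.1
  obtain ⟨xt, hxtf, hxti, hxtopt⟩ := hideal c' ⟨x0, hx0f⟩
  have hc'xt : zstar ≤ c' ⬝ᵥ xt := by
    rw [hsplitc' xt]
    by_cases hcase : ∃ kl0 ∈ I, xt kl0 = 1
    · obtain ⟨kl0, hkl0I, hkl01⟩ := hcase
      have hsum1 : ∑ kl ∈ I, R kl * xt kl = R kl0 := by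
        rw [Finset.sum_eq_single kl0]
        · rw [hkl01, mul_one]
        · intro kl hklI hne
          rcases hxti kl with h0 | h1
          · rw [h0, mul_zero]
          · exact absurd (hinc xt hxtf hxti kl hklI kl0 hkl0I h1 hkl01) hne
        · intro h
          exact absurd hkl0I h
      have hge : zstar + R kl0 ≤ c ⬝ᵥ xt := (hR kl0 hkl0I).2 ⟨xt, hxtf, hkl01, rfl⟩
      rw [hsum1]
      linarith
    · push_neg at hcase
      have hsum0 : ∑ kl ∈ I, R kl * xt kl = 0 := by
        apply Finset.sum_eq_zero
        intro kl hkl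
        rcases hxti kl with h0 | h1
        · rw [h0, mul_zero]
        · exact absurd h1 (hcase kl hkl)
      have hge : zstar ≤ c ⬝ᵥ xt := hz.2 ⟨xt, hxtf, rfl⟩
      rw [hsum0]
      linarith
  have hlb : ∀ x : Fin E → ℝ, Feas A b grp x → (∀ j ∈ I, 1/(I.card:ℝ) ≤ x j) →
      zstar + 1/(I.card:ℝ) * ∑ kl ∈ I, R kl ≤ c ⬝ᵥ x := by
    intro x hxf hxge
    have h1 := hsplitc' x
    have h2 : c' ⬝ᵥ xt ≤ c' ⬝ᵥ x := hxtopt x hxf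
    have h3 : ∑ kl ∈ I, R kl * (1/(I.card:ℝ)) ≤ ∑ kl ∈ I, R kl * x kl := by
      apply Finset.sum_le_sum
      intro kl hkl
      exact mul_le_mul_of_nonneg_left (hxge kl hkl) (hRnn kl hkl)
    have h4 : ∑ kl ∈ I, R kl * (1/(I.card:ℝ)) = 1/(I.card:ℝ) * ∑ kl ∈ I, R kl := by
      rw [← Finset.sum_mul]
      ring
    rw [h4] at h3
    linarith
  -- apply strong duality to the merged primal
  set MM : ((Fin m ⊕ (Fin n ⊕ Fin n)) ⊕ Fin E) → Fin E → ℝ := fun r => match r with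
    | .inl (.inl q) => fun j => A q j
    | .inl (.inr (.inl i)) => fun j => if grp j = i then 1 else 0
    | .inl (.inr (.inr i)) => fun j => if grp j = i then -1 else 0
    | .inr j0 => fun j => if j = j0 then 1 else 0 with hMM
  set dd : ((Fin m ⊕ (Fin n ⊕ Fin n)) ⊕ Fin E) → ℝ := fun r => match r with
    | .inl (.inl q) => b q
    | .inl (.inr (.inl i)) => (1:ℝ)
    | .inl (.inr (.inr i)) => (-1:ℝ)
    | .inr j0 => if j0 ∈ I then 1/(I.card:ℝ) else 0 with hdd
  have hrow1 : ∀ (x : Fin E → ℝ) (q : Fin m), ∑ j, MM (.inl (.inl q)) j * x j = A.mulVec x q :=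
    fun x q => rfl
  have hrow2 : ∀ (x : Fin E → ℝ) (i : Fin n),
      ∑ j, MM (.inl (.inr (.inl i))) j * x j = ∑ j, if grp j = i then x j else 0 := by
    intro x i
    rw [hind i x]
  have hrow3 : ∀ (x : Fin E → ℝ) (i : Fin n),
      ∑ j, MM (.inl (.inr (.inr i))) j * x j = -∑ j, if grp j = i then x j else 0 := by
    intro x i
    rw [← Finset.sum_neg_distrib]
    apply Finset.sum_congr rfl
    intro j _
    by_cases h : grp j = i <;> simp [hMM, h]
  have hrow4 : ∀ (x : Fin E → ℝ) (j0 : Fin E), ∑ j, MM (.inr j0) j * x j = x j0 := by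
    intro x j0
    have e : ∀ j, MM (.inr j0) j * x j = if j = j0 then x j else 0 := by
      intro j
      by_cases h : j = j0 <;> simp [hMM, h]
    rw [Finset.sum_congr rfl (fun j _ => e j), Finset.sum_ite_eq']
    simp
  have hfeas_iff : ∀ x : Fin E → ℝ, (∀ j, 0 ≤ x j) → (∀ r, dd r ≤ ∑ j, MM r j * x j) →
      Feas A b grp x ∧ ∀ j ∈ I, 1/(I.card:ℝ) ≤ x j := by
    intro x hx0 hxr
    refine ⟨⟨?_, ?_, ?_⟩, ?_⟩
    · intro q
      have := hxr (.inl (.inl q))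
      rw [hrow1 x q] at this
      exact this
    · intro i
      have h1 := hxr (.inl (.inr (.inl i)))
      have h2 := hxr (.inl (.inr (.inr i)))
      rw [hrow2 x i] at h1
      rw [hrow3 x i] at h2
      have e1 : dd (.inl (.inr (.inl i))) = 1 := rfl
      have e2 : dd (.inl (.inr (.inr i))) = -1 := rfl
      rw [e1] at h1
      rw [e2] at h2
      linarith
    · exact hx0
    · intro j hj
      have := hxr (.inr j)
      rw [hrow4 x j] at this
      have e : dd (.inr j) = 1/(I.card:ℝ) := by simp [hdd, hj]
      rw [e] at this
      exact this
  have hxstar_sys : (∀ j, 0 ≤ xstar j) ∧ ∀ r, dd r ≤ ∑ j, MM r j * xstar j := by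
    refine ⟨fun j => hxstarF.2.2 j, ?_⟩
    intro r
    match r with
    | .inl (.inl q) =>
      rw [hrow1 xstar q]
      exact hxstarF.1 q
    | .inl (.inr (.inl i)) =>
      rw [hrow2 xstar i, hxstarF.2.1 i]
    | .inl (.inr (.inr i)) =>
      rw [hrow3 xstar i, hxstarF.2.1 i]
    | .inr j0 =>
      rw [hrow4 xstar j0]
      by_cases hj : j0 ∈ I
      · have e : dd (.inr j0) = 1/(I.card:ℝ) := by simp [hdd, hj]
        rw [e]
        exact hxstarge j0 hj
      · have e : dd (.inr j0) = 0 := by simp [hdd, hj]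
        rw [e]
        exact hxstarF.2.2 j0
  obtain ⟨y, hy0, hycol, hydz⟩ := strongDual ((Fin m ⊕ (Fin n ⊕ Fin n)) ⊕ Fin E) (Fin E)
    MM dd c (zstar + 1/(I.card:ℝ) * ∑ kl ∈ I, R kl) xstar hxstar_sys.1
    (fun r => hxstar_sys.2 r) hxstarval
    (by
      intro x hx0 hxr
      obtain ⟨hxf, hxge⟩ := hfeas_iff x hx0 hxr
      exact hlb x hxf hxge)
  -- extract the dual solution
  set uq : Fin m → ℝ := fun q => y (.inl (.inl q)) with huq
  set uv : Fin n → ℝ := fun i => y (.inl (.inr (.inl i))) - y (.inl (.inr (.inr i))) with huv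
  set sl : Fin E → ℝ := fun j => y (.inr j) with hsl
  have hcolexp : ∀ j : Fin E, ∑ r, y r * MM r j
      = (∑ q, A q j * uq q) + uv (grp j) + sl j := by
    intro j
    rw [Fintype.sum_sum_type, Fintype.sum_sum_type, Fintype.sum_sum_type]
    have e1 : ∑ q : Fin m, y (.inl (.inl q)) * MM (.inl (.inl q)) j = ∑ q, A q j * uq q := by
      apply Finset.sum_congr rfl
      intro q _
      simp [hMM, huq]
      ring
    have e2 : ∑ i : Fin n, y (.inl (.inr (.inl i))) * MM (.inl (.inr (.inl i))) j
        = y (.inl (.inr (.inl (grp j)))) := by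
      have e : ∀ i : Fin n, y (.inl (.inr (.inl i))) * MM (.inl (.inr (.inl i))) j
          = if grp j = i then y (.inl (.inr (.inl i))) else 0 := by
        intro i
        by_cases h : grp j = i <;> simp [hMM, h]
      rw [Finset.sum_congr rfl (fun i _ => e i), Finset.sum_ite_eq]
      simp
    have e3 : ∑ i : Fin n, y (.inl (.inr (.inr i))) * MM (.inl (.inr (.inr i))) j
        = -y (.inl (.inr (.inr (grp j)))) := by
      have e : ∀ i : Fin n, y (.inl (.inr (.inr i))) * MM (.inl (.inr (.inr i))) j
          = if grp j = i then -y (.inl (.inr (.inr i))) else 0 := by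
        intro i
        by_cases h : grp j = i <;> simp [hMM, h]
      rw [Finset.sum_congr rfl (fun i _ => e i), Finset.sum_ite_eq]
      simp
    have e4 : ∑ j0 : Fin E, y (.inr j0) * MM (.inr j0) j = sl j := by
      have e : ∀ j0 : Fin E, y (.inr j0) * MM (.inr j0) j
          = if j0 = j then y (.inr j0) else 0 := by
        intro j0
        by_cases h : j = j0
        · subst h; simp [hMM]
        · simp [hMM, h, Ne.symm h]
      rw [Finset.sum_congr rfl (fun j0 _ => e j0), Finset.sum_ite_eq']
      simp [hsl]
    rw [e1, e2, e3, e4, huv]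
    ring
  have hsl0 : ∀ j, 0 ≤ sl j := fun j => hy0 _
  have hdual : DualFeas A c grp uq uv := by
    constructor
    · intro q
      exact hy0 _
    · intro j
      have := hycol j
      rw [hcolexp j] at this
      have := hsl0 j
      have ecomm : ∑ q, A q j * uq q = ∑ q, uq q * A q j ∨ True := Or.inr trivial
      linarith [hycol j, hcolexp j]
  have hobj : dualObj b uq uv + 1/(I.card:ℝ) * ∑ kl ∈ I, sl kl
      = zstar + 1/(I.card:ℝ) * ∑ kl ∈ I, R kl := by
    rw [← hydz]
    rw [Fintype.sum_sum_type, Fintype.sum_sum_type, Fintype.sum_sum_type]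
    have e1 : ∑ q : Fin m, dd (.inl (.inl q)) * y (.inl (.inl q)) = b ⬝ᵥ uq := rfl
    have e2 : ∑ i : Fin n, dd (.inl (.inr (.inl i))) * y (.inl (.inr (.inl i)))
        = ∑ i : Fin n, y (.inl (.inr (.inl i))) := by
      apply Finset.sum_congr rfl
      intro i _
      show (1:ℝ) * _ = _
      rw [one_mul]
    have e3 : ∑ i : Fin n, dd (.inl (.inr (.inr i))) * y (.inl (.inr (.inr i)))
        = -∑ i : Fin n, y (.inl (.inr (.inr i))) := by
      rw [← Finset.sum_neg_distrib]
      apply Finset.sum_congr rfl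
      intro i _
      show (-1:ℝ) * _ = _
      ring
    have e4 : ∑ j0 : Fin E, dd (.inr j0) * y (.inr j0) = 1/(I.card:ℝ) * ∑ kl ∈ I, sl kl := by
      have e : ∀ j0 : Fin E, dd (.inr j0) * y (.inr j0)
          = if j0 ∈ I then 1/(I.card:ℝ) * sl j0 else 0 := by
        intro j0
        by_cases h : j0 ∈ I <;> simp [hdd, h, hsl]
      rw [Finset.sum_congr rfl (fun j0 _ => e j0), Finset.sum_ite_mem, Finset.univ_inter,
        ← Finset.mul_sum]
    rw [e1, e2, e3, e4]
    unfold dualObj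
    have e5 : ∑ i : Fin n, uv i
        = (∑ i : Fin n, y (.inl (.inr (.inl i)))) - ∑ i : Fin n, y (.inl (.inr (.inr i))) := by
      rw [← Finset.sum_sub_distrib]
    rw [e5]
    ring
  have hrcge : ∀ kl : Fin E, sl kl ≤ rc A c grp uq uv kl := by
    intro kl
    have h1 := hycol kl
    rw [hcolexp kl] at h1
    unfold rc
    linarith
  have hvge : zstar + 1/(I.card:ℝ) * ∑ kl ∈ I, R kl
      ≤ dualObj b uq uv + 1/(I.card:ℝ) * ∑ kl ∈ I, rc A c grp uq uv kl := by
    have h1 : ∑ kl ∈ I, sl kl ≤ ∑ kl ∈ I, rc A c grp uq uv kl :=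
      Finset.sum_le_sum (fun kl _ => hrcge kl)
    have h2 : 1/(I.card:ℝ) * ∑ kl ∈ I, sl kl ≤ 1/(I.card:ℝ) * ∑ kl ∈ I, rc A c grp uq uv kl :=
      mul_le_mul_of_nonneg_left h1 (by positivity)
    linarith [hobj]
  constructor
  · exact ⟨uq, uv, hdual, (le_antisymm (hub uq uv hdual) hvge).symm⟩
  · rintro w ⟨uq', uv', hdf', rfl⟩
    exact hub uq' uv' hdf'
end
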